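/- arXiv:1102.5536 — 3 statements merged into one kernel-verified Lean document; each statement's English description precedes it below -/
import Mathlib

section
/- Let (S_n) be a real random walk with negative drift E[S_1] < 0 such that E[e^{γ S_1}] = 1 for some γ > 0 and E[e^{u S_1}] < ∞ for all u ∈ (−η₁, γ + η₂), for some η₁, η₂ > 0. Then for every r with 0 < r < η₁ there is a constant c(r) > 0 such that for all a ≥ 0: E_a[ e^{−r S_{τ_0^-}} ] ≤ c(r). -/
open MeasureTheory ProbabilityTheory Filter Topology Real
open scoped ENNReal NNReal

variable {Ω : Type*} [MeasurableSpace Ω]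

/-- The random walk started at `x` with increments `X`. -/
noncomputable def walk (X : ℕ → Ω → ℝ) (x : ℝ) (n : ℕ) (ω : Ω) : ℝ :=
  x + ∑ i ∈ Finset.range n, X i ω

/-- `τ_a^+`: the first time the walk (started at `x`) exceeds level `a`, as an
extended natural number (`⊤` if the walk never exceeds `a`). -/
noncomputable def hitAbove (X : ℕ → Ω → ℝ) (x a : ℝ) (ω : Ω) : ℕ∞ :=
  ⨅ (n : ℕ) (_ : a < walk X x n ω), (n : ℕ∞)

/-- `τ_a^-`: the first time the walk (started at `x`) goes below level `a`. -/
noncomputable def hitBelow (X : ℕ → Ω → ℝ) (x a : ℝ) (ω : Ω) : ℕ∞ :=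
  ⨅ (n : ℕ) (_ : walk X x n ω < a), (n : ℕ∞)

/-- `S_{τ_a^+}`: the walk stopped when it first exceeds `a` (junk value if never). -/
noncomputable def stopAbove (X : ℕ → Ω → ℝ) (x a : ℝ) (ω : Ω) : ℝ :=
  walk X x (hitAbove X x a ω).toNat ω

/-- `S_{τ_a^-}`: the walk stopped when it first goes below `a` (junk value if never). -/
noncomputable def stopBelow (X : ℕ → Ω → ℝ) (x a : ℝ) (ω : Ω) : ℝ :=
  walk X x (hitBelow X x a ω).toNat ω

/-- A real random variable has non-arithmetic distribution: its law is not
supported on any lattice `hℤ`. -/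
def NonArithmetic (Y : Ω → ℝ) (μ : Measure Ω) : Prop :=
  ¬ ∃ h : ℝ, ∀ᵐ ω ∂μ, ∃ k : ℤ, Y ω = k * h

/-- partial sum of the first `k` coordinates of a finite vector. -/
noncomputable def psum {N : ℕ} (k : ℕ) (v : Fin N → ℝ) : ℝ :=
  ∑ i ∈ Finset.range k, if h : i < N then v ⟨i, h⟩ else 0

lemma measurable_psum (N k : ℕ) : Measurable fun v : Fin N → ℝ => psum k v := by
  unfold psum
  refine Finset.measurable_sum _ fun i _ => ?_
  by_cases h : i < N
  · simpa [h] using measurable_pi_apply (⟨i, h⟩ : Fin N)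
  · simp [h]

/-- walk functional on vectors. -/
noncomputable def gFn (δ : ℝ) (n N : ℕ) (p : ℝ × (Fin N → ℝ)) : ℝ≥0∞ :=
  if ∀ k ≤ n, 0 ≤ p.1 + psum k p.2 then
    ENNReal.ofReal (Real.exp (-δ * (p.1 + psum n p.2))) else 0

lemma measurable_gFn (δ : ℝ) (n N : ℕ) : Measurable (gFn δ n N) := by
  unfold gFn
  have hset : MeasurableSet {p : ℝ × (Fin N → ℝ) | ∀ k ≤ n, 0 ≤ p.1 + psum k p.2} := by
    have : {p : ℝ × (Fin N → ℝ) | ∀ k ≤ n, 0 ≤ p.1 + psum k p.2}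
        = ⋂ k, ⋂ (_ : k ≤ n), {p : ℝ × (Fin N → ℝ) | 0 ≤ p.1 + psum k p.2} := by
      ext p; simp
    rw [this]
    exact MeasurableSet.iInter fun k => MeasurableSet.iInter fun _ =>
      measurableSet_le measurable_const
        (measurable_fst.add ((measurable_psum N k).comp measurable_snd))
  exact Measurable.ite hset
    (ENNReal.measurable_ofReal.comp
      ((measurable_const.mul
        (measurable_fst.add ((measurable_psum N n).comp measurable_snd))).exp))
    measurable_const

/-- the walk functional on sample space. -/
noncomputable def Efn (X : ℕ → Ω → ℝ) (δ : ℝ) (j : ℕ) (x : ℝ) (n : ℕ) (ω : Ω) : ℝ≥0∞ :=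
  if ∀ k ≤ n, 0 ≤ x + ∑ i ∈ Finset.range k, X (j + i) ω then
    ENNReal.ofReal (Real.exp (-δ * (x + ∑ i ∈ Finset.range n, X (j + i) ω))) else 0

lemma psum_eq {N k : ℕ} (hk : k ≤ N) (f : ℕ → ℝ) :
    psum k (fun i : Fin N => f i.1) = ∑ i ∈ Finset.range k, f i := by
  unfold psum
  refine Finset.sum_congr rfl fun i hi => ?_
  rw [dif_pos (lt_of_lt_of_le (Finset.mem_range.1 hi) hk)]

lemma Efn_eq_gFn (X : ℕ → Ω → ℝ) (δ : ℝ) {n N : ℕ} (h : n ≤ N) (j : ℕ) (x : ℝ) (ω : Ω) :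
    Efn X δ j x n ω = gFn δ n N (x, fun i : Fin N => X (j + i.1) ω) := by
  have hps : ∀ k, k ≤ n → psum k (fun i : Fin N => X (j + i.1) ω)
      = ∑ i ∈ Finset.range k, X (j + i) ω := fun k hk => psum_eq (hk.trans h) (fun m => X (j + m) ω)
  unfold Efn gFn
  dsimp only
  rw [hps n le_rfl]
  exact if_congr (forall₂_congr fun k hk => by rw [hps k hk]) rfl rfl

lemma sum_shift (X : ℕ → Ω → ℝ) (j k : ℕ) (ω : Ω) :
    ∑ i ∈ Finset.range (k + 1), X (j + i) ω
      = X j ω + ∑ i ∈ Finset.range k, X (j + 1 + i) ω := by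
  rw [Finset.sum_range_succ', add_comm, Nat.add_zero]
  congr 1
  exact Finset.sum_congr rfl fun i _ => by rw [show j + (i + 1) = j + 1 + i from by omega]

lemma Efn_succ (X : ℕ → Ω → ℝ) (δ : ℝ) (j : ℕ) {x : ℝ} (hx : 0 ≤ x) (n : ℕ) (ω : Ω) :
    Efn X δ j x (n + 1) ω = Efn X δ (j + 1) (x + X j ω) n ω := by
  have hsum : ∀ k, x + ∑ i ∈ Finset.range (k + 1), X (j + i) ω
      = (x + X j ω) + ∑ i ∈ Finset.range k, X (j + 1 + i) ω := fun k => by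
    rw [sum_shift]; ring
  unfold Efn
  have hcond : (∀ k ≤ n + 1, 0 ≤ x + ∑ i ∈ Finset.range k, X (j + i) ω)
      ↔ (∀ k ≤ n, 0 ≤ (x + X j ω) + ∑ i ∈ Finset.range k, X (j + 1 + i) ω) := by
    constructor
    · intro h k hk
      rw [← hsum]
      exact h (k + 1) (by omega)
    · intro h k hk
      cases k with
      | zero => simpa using hx
      | succ k' => rw [hsum]; exact h k' (by omega)
  rw [if_congr hcond (by rw [hsum]) rfl]

lemma measurable_Efn {X : ℕ → Ω → ℝ} (hmeas : ∀ i, Measurable (X i)) (δ : ℝ) (j : ℕ) (x : ℝ)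
    (n : ℕ) : Measurable (Efn X δ j x n) := by
  have heq : Efn X δ j x n = fun ω => gFn δ n n (x, fun i : Fin n => X (j + i.1) ω) :=
    funext fun ω => Efn_eq_gFn X δ le_rfl j x ω
  rw [heq]
  exact (measurable_gFn δ n n).comp
    (measurable_const.prodMk (measurable_pi_lambda _ fun i => hmeas _))

lemma lintegral_indep_split {μ : Measure Ω} [IsProbabilityMeasure μ]
    (X : ℕ → Ω → ℝ) (hmeas : ∀ i, Measurable (X i))
    (hindep : iIndepFun X μ)
    (k N : ℕ) (σ : Fin N → ℕ) (hσ : ∀ i, σ i ≠ k)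
    (Ψ : ℝ × (Fin N → ℝ) → ℝ≥0∞) (hΨ : Measurable Ψ) :
    ∫⁻ ω, Ψ (X k ω, fun i => X (σ i) ω) ∂μ
      = ∫⁻ ω, ∫⁻ ω', Ψ (X k ω, fun i => X (σ i) ω') ∂μ ∂μ := by
  set V : Ω → (Fin N → ℝ) := fun ω i => X (σ i) ω with hVdef
  have hV : Measurable V := measurable_pi_lambda _ fun i => hmeas _
  have hIndep : IndepFun (X k) V μ := by
    have hdisj : Disjoint ({k} : Finset ℕ) (Finset.image σ Finset.univ) := by
      rw [Finset.disjoint_left]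
      intro x hx hx'
      rw [Finset.mem_singleton] at hx
      obtain ⟨i, -, hi⟩ := Finset.mem_image.1 hx'
      exact hσ i (by rw [hi, hx])
    have h1 := hindep.indepFun_finset {k} (Finset.image σ Finset.univ) hdisj hmeas
    have hφ : Measurable fun v : { x // x ∈ ({k} : Finset ℕ) } → ℝ =>
        v ⟨k, Finset.mem_singleton_self k⟩ := measurable_pi_apply _
    have hψ : Measurable fun v : { x // x ∈ Finset.image σ Finset.univ } → ℝ =>
        (fun i : Fin N => v ⟨σ i, Finset.mem_image_of_mem σ (Finset.mem_univ i)⟩) :=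
      measurable_pi_lambda _ fun i => measurable_pi_apply _
    exact h1.comp hφ hψ
  have hmap : μ.map (fun ω => (X k ω, V ω)) = (μ.map (X k)).prod (μ.map V) :=
    (indepFun_iff_map_prod_eq_prod_map_map (hmeas k).aemeasurable hV.aemeasurable).mp hIndep
  haveI : IsProbabilityMeasure (μ.map (X k)) := Measure.isProbabilityMeasure_map (hmeas k).aemeasurable
  haveI : IsProbabilityMeasure (μ.map V) := Measure.isProbabilityMeasure_map hV.aemeasurable
  have hpair : Measurable fun ω => (X k ω, V ω) := (hmeas k).prodMk hV
  have step1 : ∫⁻ ω, Ψ (X k ω, V ω) ∂μ = ∫⁻ p, Ψ p ∂(μ.map (fun ω => (X k ω, V ω))) :=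
    (lintegral_map hΨ hpair).symm
  have step2 : ∫⁻ p, Ψ p ∂((μ.map (X k)).prod (μ.map V))
      = ∫⁻ u, ∫⁻ v, Ψ (u, v) ∂(μ.map V) ∂(μ.map (X k)) := lintegral_prod _ hΨ.aemeasurable
  have hinner : ∀ u : ℝ, ∫⁻ v, Ψ (u, v) ∂(μ.map V) = ∫⁻ ω', Ψ (u, V ω') ∂μ := fun u =>
    lintegral_map (hΨ.comp measurable_prodMk_left) hV
  have houter : Measurable fun u => ∫⁻ ω', Ψ (u, V ω') ∂μ := by
    have : Measurable fun u => ∫⁻ v, Ψ (u, v) ∂(μ.map V) :=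
      Measurable.lintegral_prod_right (f := fun u v => Ψ (u, v)) hΨ
    simpa only [hinner] using this
  have step3 : ∫⁻ u, ∫⁻ v, Ψ (u, v) ∂(μ.map V) ∂(μ.map (X k))
      = ∫⁻ ω, ∫⁻ ω', Ψ (X k ω, V ω') ∂μ ∂μ := by
    rw [show (fun u => ∫⁻ v, Ψ (u, v) ∂(μ.map V)) = fun u => ∫⁻ ω', Ψ (u, V ω') ∂μ from
      funext hinner]
    exact lintegral_map houter (hmeas k)
  rw [step1, hmap, step2, step3]

set_option maxHeartbeats 2000000 in
/-- Lemma `lem:estsub`, (est1sub). For a random walk with negative drift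
such that `E[e^{γ S_1}] = 1` and exponential moments on `(-η₁, γ + η₂)`: for every
`0 < r < η₁` there is `c(r) > 0` such that for all `a ≥ 0`, `E_a[e^{-r S_{τ_0^-}}] ≤ c(r)`. -/
theorem negative_drift_undershoot_exponential_bound
    (μ : Measure Ω) [IsProbabilityMeasure μ]
    (X : ℕ → Ω → ℝ) (hmeas : ∀ i, Measurable (X i))
    (hindep : iIndepFun X μ)
    (hident : ∀ i, IdentDistrib (X i) (X 0) μ μ)
    (hdrift : ∫ ω, X 0 ω ∂μ < 0)
    (γ η₁ η₂ : ℝ) (hγ : 0 < γ) (hη₁ : 0 < η₁) (hη₂ : 0 < η₂)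
    (hγ1 : ∫ ω, Real.exp (γ * X 0 ω) ∂μ = 1)
    (hexp : ∀ u : ℝ, -η₁ < u → u < γ + η₂ →
      Integrable (fun ω => Real.exp (u * X 0 ω)) μ)
    (r : ℝ) (hr0 : 0 < r) (hr : r < η₁) :
    ∃ c : ℝ, 0 < c ∧ ∀ a : ℝ, 0 ≤ a →
      ∫⁻ ω, ENNReal.ofReal (Real.exp (-r * stopBelow X a 0 ω)) ∂μ ≤ ENNReal.ofReal c := by
  classical
  -- basic constants
  obtain ⟨m, hmdef⟩ : ∃ z : ℝ, z = -∫ ω, X 0 ω ∂μ := ⟨_, rfl⟩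
  have hm : 0 < m := by rw [hmdef]; linarith
  obtain ⟨δ, hδdef⟩ : ∃ z : ℝ, z = (r + η₁) / 2 := ⟨_, rfl⟩
  have hrδ : r ≤ δ := by rw [hδdef]; linarith
  have hδη : δ < η₁ := by rw [hδdef]; linarith
  have hδ0 : 0 < δ := by rw [hδdef]; linarith
  obtain ⟨β, hβdef⟩ : ∃ z : ℝ, z = δ / 2 := ⟨_, rfl⟩
  have hβ0 : 0 < β := by rw [hβdef]; linarith
  have hβδ : β < δ := by rw [hβdef]; linarith
  have Iδ : Integrable (fun ω => Real.exp (-δ * X 0 ω)) μ :=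
    hexp _ (by linarith) (by linarith)
  -- integrability of X 0
  have IX : Integrable (X 0) μ := by
    obtain ⟨ε, hεdef⟩ : ∃ z : ℝ, z = min β γ := ⟨_, rfl⟩
    have hε0 : 0 < ε := hεdef ▸ lt_min hβ0 hγ
    have hεβ : ε ≤ β := hεdef ▸ min_le_left _ _
    have hεγ : ε ≤ γ := hεdef ▸ min_le_right _ _
    have Iexpp : Integrable (fun ω => Real.exp (ε * X 0 ω)) μ :=
      hexp _ (by linarith) (by linarith)
    have Iexpm : Integrable (fun ω => Real.exp (-ε * X 0 ω)) μ :=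
      hexp _ (by linarith) (by linarith)
    refine Integrable.mono' (((Iexpp.add Iexpm)).div_const ε)
      (hmeas 0).aestronglyMeasurable (Filter.Eventually.of_forall fun ω => ?_)
    rw [Real.norm_eq_abs]
    have h1 : ε * |X 0 ω| + 1 ≤ Real.exp (ε * |X 0 ω|) := Real.add_one_le_exp _
    have h2 : Real.exp (ε * |X 0 ω|) ≤ Real.exp (ε * X 0 ω) + Real.exp (-ε * X 0 ω) := by
      rcases abs_cases (X 0 ω) with ⟨h, _⟩ | ⟨h, _⟩
      · rw [h]; nlinarith [Real.exp_pos (-ε * X 0 ω)]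
      · rw [h, mul_neg, ← neg_mul]; nlinarith [Real.exp_pos (ε * X 0 ω)]
    rw [Pi.add_apply, le_div_iff₀ hε0]
    nlinarith [abs_nonneg (X 0 ω)]
  have hIntX : ∫ ω, X 0 ω ∂μ = -m := by rw [hmdef]; ring
  obtain ⟨φn, hφdef⟩ : ∃ z : ℝ, z = ∫ ω, Real.exp (-δ * X 0 ω) ∂μ := ⟨_, rfl⟩
  have hφpos : 0 < φn := hφdef ▸ integral_exp_pos Iδ
  obtain ⟨B, hBdef⟩ : ∃ z : ℝ, z = 2 / (β * m) := ⟨_, rfl⟩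
  have hB : 0 < B := hBdef ▸ div_pos two_pos (mul_pos hβ0 hm)
  obtain ⟨L, hLdef⟩ : ∃ z : ℝ, z = max 0 (Real.log (B * φn) / (δ - β)) := ⟨_, rfl⟩
  have hL0 : 0 ≤ L := hLdef ▸ le_max_left _ _
  have hLkey : B * φn * Real.exp (-(δ - β) * L) ≤ 1 := by
    have hdb : 0 < δ - β := by linarith
    have h1 : Real.log (B * φn) ≤ (δ - β) * L := by
      have h : Real.log (B * φn) / (δ - β) ≤ L := by
        rw [hLdef]; exact le_max_right _ _
      calc Real.log (B * φn) = Real.log (B * φn) / (δ - β) * (δ - β) := by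
            field_simp
        _ ≤ L * (δ - β) := mul_le_mul_of_nonneg_right h hdb.le
        _ = (δ - β) * L := by ring
    have h2 : B * φn ≤ Real.exp ((δ - β) * L) := by
      rw [← Real.exp_log (mul_pos hB hφpos)]
      exact Real.exp_le_exp.2 h1
    rw [neg_mul, Real.exp_neg, ← div_eq_mul_inv, div_le_one (Real.exp_pos _)]
    exact h2
  obtain ⟨D, hDdef⟩ : ∃ z : ℝ, z = B * (Real.exp (β * L) - 1) := ⟨_, rfl⟩
  have hD0 : 0 ≤ D := by
    have : (1:ℝ) ≤ Real.exp (β * L) := Real.one_le_exp (by positivity)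
    rw [hDdef]; nlinarith
  obtain ⟨F, hFdef⟩ : ∃ z : ℝ → ℝ, z = fun y => D + B * (1 - Real.exp (-β * y)) := ⟨_, rfl⟩
  have hFle : ∀ y : ℝ, F y ≤ D + B := by
    intro y; rw [hFdef]; have := Real.exp_pos (-β * y); dsimp only; nlinarith
  have hF0 : ∀ y : ℝ, 0 ≤ y → 0 ≤ F y := by
    intro y hy
    have h1 : Real.exp (-β * y) ≤ 1 := Real.exp_le_one_iff.2 (by nlinarith)
    rw [hFdef]; dsimp only; nlinarith
  have hFmeas : Measurable F := by
    rw [hFdef]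
    exact (measurable_const.add (measurable_const.mul
      (measurable_const.sub ((measurable_const.mul measurable_id).exp))))
  -- the key supermartingale inequality, for X 0
  have star : ∀ x : ℝ, 0 ≤ x →
      ENNReal.ofReal (Real.exp (-δ * x)) +
        ∫⁻ ω, (if 0 ≤ x + X 0 ω then ENNReal.ofReal (F (x + X 0 ω)) else 0) ∂μ
      ≤ ENNReal.ofReal (F x) := by
    intro x hx
    obtain ⟨g, hgdef⟩ : ∃ z : Ω → ℝ, z = fun ω => if 0 ≤ x + X 0 ω then F (x + X 0 ω) else 0 := ⟨_, rfl⟩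
    have hgmeas : Measurable g := by
      rw [hgdef]
      exact Measurable.ite
        (measurableSet_le measurable_const (measurable_const.add (hmeas 0)))
        (hFmeas.comp (measurable_const.add (hmeas 0))) measurable_const
    have hg0 : ∀ ω, 0 ≤ g ω := by
      intro ω; rw [hgdef]; dsimp only; split
      · exact hF0 _ ‹_›
      · exact le_rfl
    have hgbdd : ∀ ω, g ω ≤ D + B := by
      intro ω; rw [hgdef]; dsimp only; split
      · exact hFle _
      · linarith
    have Ig : Integrable g μ := by
      refine Integrable.mono' (integrable_const (D + B)) hgmeas.aestronglyMeasurable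
        (Filter.Eventually.of_forall fun ω => ?_)
      rw [Real.norm_eq_abs, abs_of_nonneg (hg0 ω)]
      exact hgbdd ω
    have hlint : ∫⁻ ω, (if 0 ≤ x + X 0 ω then ENNReal.ofReal (F (x + X 0 ω)) else 0) ∂μ
        = ENNReal.ofReal (∫ ω, g ω ∂μ) := by
      rw [ofReal_integral_eq_lintegral_ofReal Ig (Filter.Eventually.of_forall hg0)]
      refine lintegral_congr fun ω => ?_
      rw [hgdef]; dsimp only; split <;> simp
    obtain ⟨c2, hc2def⟩ : ∃ z : ℝ, z = B * Real.exp (-(δ - β) * L) * Real.exp (-δ * x) := ⟨_, rfl⟩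
    have hc2 : 0 ≤ c2 := by rw [hc2def]; exact mul_nonneg (mul_nonneg hB.le (Real.exp_pos _).le) (Real.exp_pos _).le
    obtain ⟨P, hPdef⟩ : ∃ z : Ω → ℝ, z = fun ω => ((D + B - B * Real.exp (-β * x)) +
        (B * Real.exp (-β * x) * β) * X 0 ω) + c2 * Real.exp (-δ * X 0 ω) := ⟨_, rfl⟩
    have hgP : ∀ ω, g ω ≤ P ω := by
      intro ω
      obtain ⟨u, hudef⟩ : ∃ z : ℝ, z = X 0 ω := ⟨_, rfl⟩
      have e1 : Real.exp (-β * (x + u)) = Real.exp (-β * x) * Real.exp (-β * u) := by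
        rw [← Real.exp_add]; ring_nf
      have e2 : c2 * Real.exp (-δ * u)
          = B * Real.exp (-(δ - β) * L) * Real.exp (-δ * (x + u)) := by
        rw [hc2def, mul_assoc, ← Real.exp_add]
        congr 1
        ring
      have key1 : B * Real.exp (-β * x) * (1 - β * u) ≤ B * Real.exp (-β * (x + u)) := by
        have h1 : 1 - β * u ≤ Real.exp (-β * u) := by
          have := Real.add_one_le_exp (-β * u); linarith
        have h2 : 0 ≤ B * Real.exp (-β * x) := mul_nonneg hB.le (Real.exp_pos _).le
        calc B * Real.exp (-β * x) * (1 - β * u)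
            ≤ B * Real.exp (-β * x) * Real.exp (-β * u) := mul_le_mul_of_nonneg_left h1 h2
          _ = B * Real.exp (-β * (x + u)) := by rw [e1]; ring
      have hc2u : 0 ≤ c2 * Real.exp (-δ * u) := mul_nonneg hc2 (Real.exp_pos _).le
      rw [hgdef, hPdef]; dsimp only
      rw [← hudef]
      split
      case isTrue hcase =>
        rw [hFdef]; dsimp only
        nlinarith
      case isFalse hcase =>
        push_neg at hcase
        by_cases hL2 : -L ≤ x + u
        · have h3 : Real.exp (-β * (x + u)) ≤ Real.exp (β * L) :=
            Real.exp_le_exp.2 (by nlinarith)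
          have h4 : B * Real.exp (-β * (x + u)) ≤ B + D := by
            rw [hDdef]; nlinarith
          nlinarith
        · push_neg at hL2
          have h5 : Real.exp (-β * (x + u))
              ≤ Real.exp (-(δ - β) * L) * Real.exp (-δ * (x + u)) := by
            rw [← Real.exp_add]
            apply Real.exp_le_exp.2
            nlinarith
          have h6 : B * Real.exp (-β * (x + u)) ≤ c2 * Real.exp (-δ * u) := by
            rw [e2]; nlinarith
          nlinarith
    have IP : Integrable P μ := by
      rw [hPdef]
      exact ((integrable_const _).add (IX.const_mul _)).add (Iδ.const_mul c2)
    have hintP : ∫ ω, P ω ∂μ = ((D + B - B * Real.exp (-β * x)) +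
        (B * Real.exp (-β * x) * β) * (-m)) + c2 * φn := by
      have h1 : Integrable (fun ω => D + B - B * Real.exp (-β * x)
          + B * Real.exp (-β * x) * β * X 0 ω) μ := by
        exact (integrable_const _).add (IX.const_mul _)
      have h2 : Integrable (fun ω => c2 * Real.exp (-δ * X 0 ω)) μ := by
        exact Iδ.const_mul c2
      have h3 : Integrable (fun ω => B * Real.exp (-β * x) * β * X 0 ω) μ := by
        exact IX.const_mul _
      have heq : ∫ ω, P ω ∂μ = ∫ ω, (D + B - B * Real.exp (-β * x)
          + B * Real.exp (-β * x) * β * X 0 ω) + c2 * Real.exp (-δ * X 0 ω) ∂μ := by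
        rw [hPdef]
      rw [heq, integral_add h1 h2, integral_add (integrable_const _) h3,
        integral_const_mul, integral_const_mul, integral_const, hIntX, ← hφdef]
      simp [measure_univ]
    have hreal : Real.exp (-δ * x) + ∫ ω, g ω ∂μ ≤ F x := by
      have h5 : ∫ ω, g ω ∂μ ≤ ∫ ω, P ω ∂μ := integral_mono Ig IP hgP
      rw [hintP] at h5
      have h6 : c2 * φn ≤ Real.exp (-δ * x) := by
        calc c2 * φn = (B * φn * Real.exp (-(δ - β) * L)) * Real.exp (-δ * x) := by
              rw [hc2def]; ring
          _ ≤ 1 * Real.exp (-δ * x) :=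
              mul_le_mul_of_nonneg_right hLkey (Real.exp_pos _).le
          _ = Real.exp (-δ * x) := one_mul _
      have h7 : Real.exp (-δ * x) ≤ Real.exp (-β * x) := Real.exp_le_exp.2 (by nlinarith)
      have h8 : B * Real.exp (-β * x) * β * m = 2 * Real.exp (-β * x) := by
        rw [hBdef]; field_simp
      rw [hFdef]; dsimp only
      nlinarith
    calc ENNReal.ofReal (Real.exp (-δ * x)) +
          ∫⁻ ω, (if 0 ≤ x + X 0 ω then ENNReal.ofReal (F (x + X 0 ω)) else 0) ∂μ
        = ENNReal.ofReal (Real.exp (-δ * x)) + ENNReal.ofReal (∫ ω, g ω ∂μ) := by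
          rw [hlint]
      _ = ENNReal.ofReal (Real.exp (-δ * x) + ∫ ω, g ω ∂μ) :=
          (ENNReal.ofReal_add (Real.exp_pos _).le (integral_nonneg hg0)).symm
      _ ≤ ENNReal.ofReal (F x) := ENNReal.ofReal_le_ofReal hreal
  -- transfer star to X j
  have hgbar_meas : ∀ x : ℝ, Measurable
      (fun u : ℝ => if 0 ≤ x + u then ENNReal.ofReal (F (x + u)) else 0) := by
    intro x
    exact Measurable.ite (measurableSet_le measurable_const (measurable_const.add measurable_id))
      (ENNReal.measurable_ofReal.comp (hFmeas.comp (measurable_const.add measurable_id)))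
      measurable_const
  have starj : ∀ (j : ℕ) (x : ℝ), 0 ≤ x →
      ENNReal.ofReal (Real.exp (-δ * x)) +
        ∫⁻ ω, (if 0 ≤ x + X j ω then ENNReal.ofReal (F (x + X j ω)) else 0) ∂μ
      ≤ ENNReal.ofReal (F x) := by
    intro j x hx
    have htrans : ∫⁻ ω, (if 0 ≤ x + X j ω then ENNReal.ofReal (F (x + X j ω)) else 0) ∂μ
        = ∫⁻ ω, (if 0 ≤ x + X 0 ω then ENNReal.ofReal (F (x + X 0 ω)) else 0) ∂μ := by
      calc ∫⁻ ω, (if 0 ≤ x + X j ω then ENNReal.ofReal (F (x + X j ω)) else 0) ∂μ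
          = ∫⁻ u, (if 0 ≤ x + u then ENNReal.ofReal (F (x + u)) else 0) ∂(μ.map (X j)) :=
            (lintegral_map (hgbar_meas x) (hmeas j)).symm
        _ = ∫⁻ u, (if 0 ≤ x + u then ENNReal.ofReal (F (x + u)) else 0) ∂(μ.map (X 0)) := by
            rw [(hident j).map_eq]
        _ = ∫⁻ ω, (if 0 ≤ x + X 0 ω then ENNReal.ofReal (F (x + X 0 ω)) else 0) ∂μ :=
            lintegral_map (hgbar_meas x) (hmeas 0)
    rw [htrans]
    exact star x hx
  -- the inductive supermartingale bound
  have Qbound : ∀ (N j : ℕ) (x : ℝ), 0 ≤ x →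
      ∑ n ∈ Finset.range N, ∫⁻ ω, Efn X δ j x n ω ∂μ ≤ ENNReal.ofReal (F x) := by
    intro N
    induction N with
    | zero =>
      intro j x hx
      simp
    | succ N ih =>
      intro j x hx
      rw [Finset.sum_range_succ']
      have h0 : ∫⁻ ω, Efn X δ j x 0 ω ∂μ = ENNReal.ofReal (Real.exp (-δ * x)) := by
        have hz : ∀ ω, Efn X δ j x 0 ω = ENNReal.ofReal (Real.exp (-δ * x)) := by
          intro ω
          unfold Efn
          rw [if_pos]
          · simp
          · intro k hk
            have hk0 : k = 0 := Nat.le_zero.mp hk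
            subst hk0
            simpa using hx
        rw [lintegral_congr hz, lintegral_const, measure_univ, mul_one]
      have hmeasshift : ∀ n ∈ Finset.range N, Measurable
          (fun ω => Efn X δ (j+1) (x + X j ω) n ω) := by
        intro n hn
        have hn' : n ≤ N := le_of_lt (Finset.mem_range.1 hn)
        have heq2 : (fun ω => Efn X δ (j+1) (x + X j ω) n ω)
            = fun ω => gFn δ n N (x + X j ω, fun i : Fin N => X (j + 1 + i.1) ω) :=
          funext fun ω => Efn_eq_gFn X δ hn' (j+1) _ ω
        rw [heq2]
        exact (measurable_gFn δ n N).comp ((measurable_const.add (hmeas j)).prodMk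
          (measurable_pi_lambda _ fun i => hmeas _))
      have hstep : ∑ n ∈ Finset.range N, ∫⁻ ω, Efn X δ j x (n+1) ω ∂μ
          = ∫⁻ ω, ∑ n ∈ Finset.range N, Efn X δ (j+1) (x + X j ω) n ω ∂μ := by
        rw [lintegral_finset_sum _ hmeasshift]
        exact Finset.sum_congr rfl fun n _ =>
          lintegral_congr fun ω => Efn_succ X δ j hx n ω
      obtain ⟨Ψ, hΨdef⟩ : ∃ z : (ℝ × (Fin N → ℝ) → ℝ≥0∞), z =
          fun p => ∑ n ∈ Finset.range N, gFn δ n N (x + p.1, p.2) := ⟨_, rfl⟩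
      have hΨmeas : Measurable Ψ := by
        rw [hΨdef]
        exact Finset.measurable_sum _ fun n _ => (measurable_gFn δ n N).comp
          ((measurable_const.add measurable_fst).prodMk measurable_snd)
      have hσ : ∀ i : Fin N, j + 1 + i.1 ≠ j := fun i => by omega
      have hid : ∀ (y ω' : Ω), Ψ (X j y, fun i : Fin N => X (j + 1 + i.1) ω')
          = ∑ n ∈ Finset.range N, Efn X δ (j+1) (x + X j y) n ω' := by
        intro y ω'
        rw [hΨdef]
        exact Finset.sum_congr rfl fun n hn =>
          (Efn_eq_gFn X δ (le_of_lt (Finset.mem_range.1 hn)) (j+1) _ ω').symm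
      have hsplit := lintegral_indep_split (μ := μ) X hmeas hindep j N
        (fun i => j + 1 + i.1) hσ Ψ hΨmeas
      have hinner : ∀ ω, (∫⁻ ω', Ψ (X j ω, fun i : Fin N => X (j + 1 + i.1) ω') ∂μ)
          ≤ (if 0 ≤ x + X j ω then ENNReal.ofReal (F (x + X j ω)) else 0) := by
        intro ω
        rw [lintegral_congr (hid ω),
          lintegral_finset_sum _ (fun n _ => measurable_Efn hmeas δ (j+1) _ n)]
        by_cases hc : 0 ≤ x + X j ω
        · rw [if_pos hc]
          exact ih (j+1) _ hc
        · rw [if_neg hc]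
          have hz : ∀ n ∈ Finset.range N, ∫⁻ ω', Efn X δ (j+1) (x + X j ω) n ω' ∂μ = 0 := by
            intro n _
            have hz2 : ∀ ω', Efn X δ (j+1) (x + X j ω) n ω' = 0 := by
              intro ω'
              unfold Efn
              rw [if_neg]
              intro hall
              exact hc (by simpa using hall 0 (Nat.zero_le n))
            rw [lintegral_congr hz2, lintegral_const, zero_mul]
          rw [Finset.sum_eq_zero hz]
      calc (∑ n ∈ Finset.range N, ∫⁻ ω, Efn X δ j x (n+1) ω ∂μ) + ∫⁻ ω, Efn X δ j x 0 ω ∂μ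
          = ENNReal.ofReal (Real.exp (-δ * x))
            + ∫⁻ ω, Ψ (X j ω, fun i : Fin N => X (j + 1 + i.1) ω) ∂μ := by
            rw [h0, hstep, add_comm]
            congr 1
            exact lintegral_congr fun ω => (hid ω ω).symm
        _ = ENNReal.ofReal (Real.exp (-δ * x))
            + ∫⁻ ω, ∫⁻ ω', Ψ (X j ω, fun i : Fin N => X (j + 1 + i.1) ω') ∂μ ∂μ := by
            rw [hsplit]
        _ ≤ ENNReal.ofReal (Real.exp (-δ * x))
            + ∫⁻ ω, (if 0 ≤ x + X j ω then ENNReal.ofReal (F (x + X j ω)) else 0) ∂μ :=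
            add_le_add le_rfl (lintegral_mono hinner)
        _ ≤ ENNReal.ofReal (F x) := starj j x hx
  -- final assembly
  refine ⟨1 + (D + B) * φn, by nlinarith [mul_nonneg (by linarith : (0:ℝ) ≤ D + B) hφpos.le], ?_⟩
  intro a ha
  obtain ⟨t, htdef⟩ : ∃ z : ℕ → Ω → ℝ≥0∞, z = fun n ω =>
      if ((∀ k < n, 0 ≤ walk X a k ω) ∧ walk X a n ω < 0) then
        ENNReal.ofReal (Real.exp (-r * walk X a n ω)) else 0 := ⟨_, rfl⟩
  have hwalkmeas : ∀ n, Measurable (walk X a n) := by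
    intro n
    unfold walk
    exact measurable_const.add (Finset.measurable_sum _ fun i _ => hmeas i)
  have htmeas : ∀ n, Measurable (t n) := by
    intro n
    rw [htdef]
    refine Measurable.ite ?_
      (ENNReal.measurable_ofReal.comp ((measurable_const.mul (hwalkmeas n)).exp))
      measurable_const
    refine MeasurableSet.inter ?_ (measurableSet_lt (hwalkmeas n) measurable_const)
    show MeasurableSet {ω | ∀ k < n, 0 ≤ walk X a k ω}
    have hseteq : {ω | ∀ k < n, 0 ≤ walk X a k ω}
        = ⋂ k, ⋂ (_ : k < n), {ω | 0 ≤ walk X a k ω} := by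
      ext ω; simp
    rw [hseteq]
    exact MeasurableSet.iInter fun k => MeasurableSet.iInter fun _ =>
      measurableSet_le measurable_const (hwalkmeas k)
  have claim1 : ∀ ω, ENNReal.ofReal (Real.exp (-r * stopBelow X a 0 ω)) ≤ 1 + ∑' n, t n ω := by
    intro ω
    by_cases h : ∃ n, walk X a n ω < 0
    · have hτ : hitBelow X a 0 ω = (Nat.find h : ℕ∞) := by
        unfold hitBelow
        apply le_antisymm
        · exact iInf₂_le (Nat.find h) (Nat.find_spec h)
        · refine le_iInf₂ fun n hn => ?_
          exact_mod_cast Nat.find_min' h hn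
      have hstop : stopBelow X a 0 ω = walk X a (Nat.find h) ω := by
        unfold stopBelow
        rw [hτ]
        simp
      have hcond : (∀ k < Nat.find h, 0 ≤ walk X a k ω) ∧ walk X a (Nat.find h) ω < 0 :=
        ⟨fun k hk => le_of_not_gt (Nat.find_min h hk), Nat.find_spec h⟩
      have htval : t (Nat.find h) ω
          = ENNReal.ofReal (Real.exp (-r * walk X a (Nat.find h) ω)) := by
        rw [htdef]
        exact if_pos hcond
      calc ENNReal.ofReal (Real.exp (-r * stopBelow X a 0 ω))
          = t (Nat.find h) ω := by rw [hstop, htval]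
        _ ≤ ∑' n, t n ω := ENNReal.le_tsum _
        _ ≤ 1 + ∑' n, t n ω := le_add_self
    · push_neg at h
      have hτ : hitBelow X a 0 ω = ⊤ := by
        unfold hitBelow
        refine iInf_eq_top.mpr fun n => iInf_eq_top.mpr fun hn => ?_
        exact absurd hn (not_lt.2 (h n))
      have hstop : stopBelow X a 0 ω = a := by
        unfold stopBelow walk
        rw [hτ]
        simp
      rw [hstop]
      have h1 : Real.exp (-r * a) ≤ 1 := Real.exp_le_one_iff.2 (by nlinarith)
      calc ENNReal.ofReal (Real.exp (-r * a)) ≤ ENNReal.ofReal 1 :=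
            ENNReal.ofReal_le_ofReal h1
        _ = 1 := ENNReal.ofReal_one
        _ ≤ 1 + ∑' n, t n ω := le_self_add
  have step1 : ∫⁻ ω, ENNReal.ofReal (Real.exp (-r * stopBelow X a 0 ω)) ∂μ
      ≤ 1 + ∑' n, ∫⁻ ω, t n ω ∂μ := by
    calc ∫⁻ ω, ENNReal.ofReal (Real.exp (-r * stopBelow X a 0 ω)) ∂μ
        ≤ ∫⁻ ω, (1 + ∑' n, t n ω) ∂μ := lintegral_mono claim1
      _ = 1 + ∑' n, ∫⁻ ω, t n ω ∂μ := by
          rw [lintegral_add_left measurable_const, lintegral_const, measure_univ, mul_one,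
            lintegral_tsum fun n => (htmeas n).aemeasurable]
  have ht0 : ∫⁻ ω, t 0 ω ∂μ = 0 := by
    have hz : ∀ ω, t 0 ω = 0 := by
      intro ω
      rw [htdef]
      refine if_neg ?_
      rintro ⟨-, hlt⟩
      unfold walk at hlt
      simp at hlt
      linarith
    rw [lintegral_congr hz, lintegral_const, zero_mul]
  have hwalkW : ∀ (n : ℕ) (ω : Ω), walk X a n ω = a + ∑ i ∈ Finset.range n, X (0 + i) ω := by
    intro n ω
    unfold walk
    congr 1
    exact Finset.sum_congr rfl fun i _ => by rw [Nat.zero_add]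
  have hXkint : ∀ k : ℕ, ∫⁻ ω, ENNReal.ofReal (Real.exp (-δ * X k ω)) ∂μ
      = ENNReal.ofReal φn := by
    intro k
    have hgm : Measurable fun u : ℝ => ENNReal.ofReal (Real.exp (-δ * u)) :=
      ENNReal.measurable_ofReal.comp ((measurable_const.mul measurable_id).exp)
    calc ∫⁻ ω, ENNReal.ofReal (Real.exp (-δ * X k ω)) ∂μ
        = ∫⁻ u, ENNReal.ofReal (Real.exp (-δ * u)) ∂(μ.map (X k)) :=
          (lintegral_map hgm (hmeas k)).symm
      _ = ∫⁻ u, ENNReal.ofReal (Real.exp (-δ * u)) ∂(μ.map (X 0)) := by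
          rw [(hident k).map_eq]
      _ = ∫⁻ ω, ENNReal.ofReal (Real.exp (-δ * X 0 ω)) ∂μ := lintegral_map hgm (hmeas 0)
      _ = ENNReal.ofReal φn := by
          rw [hφdef]
          exact (ofReal_integral_eq_lintegral_ofReal Iδ
            (Filter.Eventually.of_forall fun ω => (Real.exp_pos _).le)).symm
  have hkey : ∀ k : ℕ, ∫⁻ ω, t (k+1) ω ∂μ
      ≤ (∫⁻ ω, Efn X δ 0 a k ω ∂μ) * ENNReal.ofReal φn := by
    intro k
    have hpt : ∀ ω, t (k+1) ω ≤ Efn X δ 0 a k ω * ENNReal.ofReal (Real.exp (-δ * X k ω)) := by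
      intro ω
      rw [htdef]
      dsimp only
      split
      case isTrue hcase =>
        obtain ⟨hall, hlt⟩ := hcase
        have hcondE : ∀ k' ≤ k, 0 ≤ a + ∑ i ∈ Finset.range k', X (0 + i) ω := by
          intro k' hk'
          rw [← hwalkW k' ω]
          exact hall k' (by omega)
        unfold Efn
        rw [if_pos hcondE]
        have hw : walk X a (k+1) ω = walk X a k ω + X k ω := by
          unfold walk
          rw [Finset.sum_range_succ]
          ring
        have hle2 : Real.exp (-r * walk X a (k+1) ω) ≤ Real.exp (-δ * walk X a (k+1) ω) := by
          apply Real.exp_le_exp.2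
          nlinarith
        have heq3 : Real.exp (-δ * walk X a (k+1) ω)
            = Real.exp (-δ * (a + ∑ i ∈ Finset.range k, X (0 + i) ω))
              * Real.exp (-δ * X k ω) := by
          rw [← Real.exp_add, ← hwalkW, hw]
          congr 1
          ring
        calc ENNReal.ofReal (Real.exp (-r * walk X a (k+1) ω))
            ≤ ENNReal.ofReal (Real.exp (-δ * walk X a (k+1) ω)) :=
              ENNReal.ofReal_le_ofReal hle2
          _ = ENNReal.ofReal (Real.exp (-δ * (a + ∑ i ∈ Finset.range k, X (0 + i) ω)))
              * ENNReal.ofReal (Real.exp (-δ * X k ω)) := by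
              rw [heq3, ENNReal.ofReal_mul (Real.exp_pos _).le]
      case isFalse hcase => exact zero_le
    refine le_trans (lintegral_mono hpt) ?_
    obtain ⟨Ψ2, hΨ2def⟩ : ∃ z : (ℝ × (Fin k → ℝ) → ℝ≥0∞), z = fun p =>
        gFn δ k k (a, p.2) * ENNReal.ofReal (Real.exp (-δ * p.1)) := ⟨_, rfl⟩
    have hΨ2meas : Measurable Ψ2 := by
      rw [hΨ2def]
      exact ((measurable_gFn δ k k).comp (measurable_const.prodMk measurable_snd)).mul
        (ENNReal.measurable_ofReal.comp ((measurable_const.mul measurable_fst).exp))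
    have hσ2 : ∀ i : Fin k, (i : ℕ) ≠ k := fun i => Nat.ne_of_lt i.2
    have hv : ∀ ω' : Ω, (fun i : Fin k => X (0 + i.1) ω') = fun i : Fin k => X i.1 ω' :=
      fun ω' => funext fun i => by rw [Nat.zero_add]
    have hid2 : ∀ (y ω' : Ω), Ψ2 (X k y, fun i : Fin k => X i.1 ω')
        = Efn X δ 0 a k ω' * ENNReal.ofReal (Real.exp (-δ * X k y)) := by
      intro y ω'
      rw [hΨ2def]
      dsimp only
      congr 1
      rw [Efn_eq_gFn X δ (le_rfl : k ≤ k) 0 a ω', hv ω']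
    have hsplit2 := lintegral_indep_split (μ := μ) X hmeas hindep k k
      (fun i => i.1) hσ2 Ψ2 hΨ2meas
    have hL1 : ∫⁻ ω, Efn X δ 0 a k ω * ENNReal.ofReal (Real.exp (-δ * X k ω)) ∂μ
        = ∫⁻ ω, Ψ2 (X k ω, fun i : Fin k => X i.1 ω) ∂μ :=
      lintegral_congr fun ω => (hid2 ω ω).symm
    have heqfinal : ∫⁻ ω, Efn X δ 0 a k ω * ENNReal.ofReal (Real.exp (-δ * X k ω)) ∂μ
        = (∫⁻ ω, Efn X δ 0 a k ω ∂μ) * ENNReal.ofReal φn := by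
      rw [hL1, hsplit2]
      calc ∫⁻ ω, ∫⁻ ω', Ψ2 (X k ω, fun i : Fin k => X i.1 ω') ∂μ ∂μ
          = ∫⁻ ω, (∫⁻ ω', Efn X δ 0 a k ω' ∂μ)
              * ENNReal.ofReal (Real.exp (-δ * X k ω)) ∂μ := by
            refine lintegral_congr fun ω => ?_
            rw [lintegral_congr (fun ω' => hid2 ω ω'),
              lintegral_mul_const _ (measurable_Efn hmeas δ 0 a k)]
        _ = (∫⁻ ω', Efn X δ 0 a k ω' ∂μ)
              * ∫⁻ ω, ENNReal.ofReal (Real.exp (-δ * X k ω)) ∂μ :=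
            lintegral_const_mul _
              (ENNReal.measurable_ofReal.comp ((measurable_const.mul (hmeas k)).exp))
        _ = (∫⁻ ω, Efn X δ 0 a k ω ∂μ) * ENNReal.ofReal φn := by rw [hXkint k]
    exact heqfinal.le
  have htsumE : ∑' k, ∫⁻ ω, Efn X δ 0 a k ω ∂μ ≤ ENNReal.ofReal (F a) := by
    rw [ENNReal.tsum_eq_iSup_nat]
    exact iSup_le fun N => Qbound N 0 a ha
  have hsum : ∑' n, ∫⁻ ω, t n ω ∂μ ≤ ENNReal.ofReal (D + B) * ENNReal.ofReal φn := by
    rw [tsum_eq_zero_add' ENNReal.summable, ht0, zero_add]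
    calc ∑' k, ∫⁻ ω, t (k+1) ω ∂μ
        ≤ ∑' k, (∫⁻ ω, Efn X δ 0 a k ω ∂μ) * ENNReal.ofReal φn := ENNReal.tsum_le_tsum hkey
      _ = (∑' k, ∫⁻ ω, Efn X δ 0 a k ω ∂μ) * ENNReal.ofReal φn := ENNReal.tsum_mul_right
      _ ≤ ENNReal.ofReal (F a) * ENNReal.ofReal φn := mul_le_mul_left htsumE _
      _ ≤ ENNReal.ofReal (D + B) * ENNReal.ofReal φn :=
          mul_le_mul_left (ENNReal.ofReal_le_ofReal (hFle a)) _
  calc ∫⁻ ω, ENNReal.ofReal (Real.exp (-r * stopBelow X a 0 ω)) ∂μ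
      ≤ 1 + ∑' n, ∫⁻ ω, t n ω ∂μ := step1
    _ ≤ 1 + ENNReal.ofReal (D + B) * ENNReal.ofReal φn := add_le_add le_rfl hsum
    _ = ENNReal.ofReal (1 + (D + B) * φn) := by
        rw [← ENNReal.ofReal_mul (by linarith : (0:ℝ) ≤ D + B),
          ENNReal.ofReal_add (by norm_num : (0:ℝ) ≤ 1)
            (mul_nonneg (by linarith : (0:ℝ) ≤ D + B) hφpos.le),
          ENNReal.ofReal_one]
end

section
/- Let (S_n) be a real random walk with negative drift E[S_1] < 0 such that E[e^{γ S_1}] = 1 for some γ > 0 and E[e^{u S_1}] < ∞ for all u ∈ (−η₁, γ + η₂), for some η₁, η₂ > 0. Then for every r > γ and every α ≥ 0 there is a constant c'(r, α) > 0 such that for all a ≥ 0 and L > 1: E_a[ ∑_{0 ≤ ℓ < τ_L^+} (1 + L − S_ℓ)^α e^{r S_ℓ} ] ≤ c'(r, α) · e^{γ(a − L)} · e^{r L}. -/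
open MeasureTheory ProbabilityTheory Filter Topology Real
open scoped ENNReal NNReal

variable {Ω : Type*} [MeasurableSpace Ω]

/-! ### Auxiliary lemmas -/

private lemma amgm_aux {A B c : ℝ} (hA : 0 ≤ A) (hB : 0 ≤ B)
    (h : c ^ 3 = 27 / 4 * (A * B ^ 2)) : c ≤ A + B := by
  by_contra hlt
  push_neg at hlt
  have h2 : 0 ≤ (A - B / 2) ^ 2 * (A + 4 * B) := mul_nonneg (sq_nonneg _) (by linarith)
  have h1 : (A + B) ^ 3 < c ^ 3 := pow_lt_pow_left₀ hlt (by linarith) (by norm_num)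
  nlinarith [h1, h2, h]

private lemma one_add_rpow_le {α c t : ℝ} (hα : 0 ≤ α) (hc : 0 < c) (ht : 0 ≤ t) :
    (1 + t) ^ α ≤ (Real.exp c / c) ^ α * Real.exp (α * (c * t)) := by
  have h2 : c * (1 + t) ≤ Real.exp (c * (1 + t)) := by
    have := Real.add_one_le_exp (c * (1 + t)); linarith
  have h1 : 1 + t ≤ Real.exp c / c * Real.exp (c * t) := by
    rw [div_mul_eq_mul_div, ← Real.exp_add, le_div_iff₀ hc]
    calc (1 + t) * c = c * (1 + t) := by ring
      _ ≤ Real.exp (c * (1 + t)) := h2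
      _ = Real.exp (c + c * t) := by ring_nf
  calc (1 + t) ^ α ≤ (Real.exp c / c * Real.exp (c * t)) ^ α :=
        Real.rpow_le_rpow (by linarith) h1 hα
    _ = (Real.exp c / c) ^ α * Real.exp (c * t) ^ α :=
        Real.mul_rpow (by positivity) (Real.exp_pos _).le
    _ = (Real.exp c / c) ^ α * Real.exp (α * (c * t)) := by
        rw [← Real.exp_mul, mul_comm (c * t) α]

private lemma walk_succ (X : ℕ → Ω → ℝ) (x : ℝ) (n : ℕ) (ω : Ω) :
    walk X x (n + 1) ω = walk X x n ω + X n ω := by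
  unfold walk; rw [Finset.sum_range_succ]; ring

private lemma indep_factor (μ : Measure Ω) (X : ℕ → Ω → ℝ) (hmeas : ∀ i, Measurable (X i))
    (hindep : iIndepFun X μ) (l : ℕ)
    {F G : Ω → ℝ≥0∞}
    (hF : Measurable[⨆ i ∈ {i : ℕ | i < l}, MeasurableSpace.comap (X i) inferInstance] F)
    (hG : Measurable[MeasurableSpace.comap (X l) inferInstance] G) :
    ∫⁻ ω, F ω * G ω ∂μ = (∫⁻ ω, F ω ∂μ) * ∫⁻ ω, G ω ∂μ := by
  have h_le : ∀ i : ℕ, MeasurableSpace.comap (X i) inferInstance ≤ ‹MeasurableSpace Ω› :=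
    fun i => measurable_iff_comap_le.1 (hmeas i)
  have h_ind := indep_iSup_of_disjoint (m := fun i : ℕ => MeasurableSpace.comap (X i) inferInstance)
      h_le hindep.iIndep (S := {i : ℕ | i < l}) (T := {l})
      (by simp only [Set.disjoint_left, Set.mem_setOf_eq, Set.mem_singleton_iff]; omega)
  have hT : (⨆ i ∈ ({l} : Set ℕ), MeasurableSpace.comap (X i) inferInstance)
      = MeasurableSpace.comap (X l) inferInstance := by simp
  rw [hT] at h_ind
  exact lintegral_mul_eq_lintegral_mul_lintegral_of_independent_measurableSpace
    (iSup₂_le fun i _ => h_le i) (h_le l) h_ind hF hG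

private lemma measurable_walk_sup (X : ℕ → Ω → ℝ) (x : ℝ) {k l : ℕ} (hk : k ≤ l) :
    Measurable[⨆ i ∈ {i : ℕ | i < l}, MeasurableSpace.comap (X i) inferInstance] (walk X x k) := by
  unfold walk
  exact measurable_const.add (Finset.measurable_sum (Finset.range k) fun i hi =>
    Measurable.of_comap_le (le_biSup (f := fun i : ℕ => MeasurableSpace.comap (X i) inferInstance)
      (show i ∈ {i : ℕ | i < l} from lt_of_lt_of_le (Finset.mem_range.1 hi) hk)))

private lemma measurable_event_sup (X : ℕ → Ω → ℝ) (x L : ℝ) (l : ℕ) :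
    MeasurableSet[⨆ i ∈ {i : ℕ | i < l}, MeasurableSpace.comap (X i) inferInstance]
      {ω | ∀ k ≤ l, walk X x k ω ≤ L} := by
  have heq : {ω | ∀ k ≤ l, walk X x k ω ≤ L} = ⋂ k ∈ Set.Iic l, walk X x k ⁻¹' Set.Iic L := by
    ext ω; simp [Set.mem_iInter, Set.mem_preimage, Set.mem_Iic]
  rw [heq]
  exact MeasurableSet.biInter (Set.to_countable _) fun k hk =>
    (measurable_walk_sup X x (Set.mem_Iic.1 hk)) measurableSet_Iic

private lemma lt_hitAbove_iff {x L : ℝ} {l : ℕ} {ω : Ω} {X : ℕ → Ω → ℝ} :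
    (l : ℕ∞) < hitAbove X x L ω ↔ ∀ k ≤ l, walk X x k ω ≤ L := by
  constructor
  · intro h k hk
    by_contra hc
    push_neg at hc
    have h1 : hitAbove X x L ω ≤ (k : ℕ∞) := by
      unfold hitAbove
      exact iInf_le_of_le k (iInf_le _ hc)
    have h2 : (k : ℕ∞) ≤ (l : ℕ∞) := by exact_mod_cast hk
    exact absurd h (not_lt.2 (h1.trans h2))
  · intro h
    have h1 : (l : ℕ∞) + 1 ≤ hitAbove X x L ω := by
      refine le_iInf fun n => le_iInf fun hn => ?_
      have hnl : l < n := by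
        by_contra hle
        push_neg at hle
        exact absurd hn (not_lt.2 (h n hle))
      have : ((l + 1 : ℕ) : ℕ∞) ≤ (n : ℕ∞) := by exact_mod_cast hnl
      simpa using this
    calc (l : ℕ∞) < ((l + 1 : ℕ) : ℕ∞) := by exact_mod_cast Nat.lt_succ_self l
      _ = (l : ℕ∞) + 1 := by push_cast; rfl
      _ ≤ _ := h1

private lemma mgf_half_lt_one (μ : Measure Ω) [IsProbabilityMeasure μ] (X : ℕ → Ω → ℝ)
    (hdrift : ∫ ω, X 0 ω ∂μ < 0) (γ : ℝ) (hγ : 0 < γ)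
    (hγ1 : ∫ ω, Real.exp (γ * X 0 ω) ∂μ = 1)
    (hIγ : Integrable (fun ω => Real.exp (γ * X 0 ω)) μ)
    (hIhalf : Integrable (fun ω => Real.exp (γ / 2 * X 0 ω)) μ) :
    ∫ ω, Real.exp (γ / 2 * X 0 ω) ∂μ < 1 := by
  set g : Ω → ℝ := fun ω => Real.exp (γ / 2 * X 0 ω) with hgdef
  have hg2 : (fun ω => g ω ^ 2) = fun ω => Real.exp (γ * X 0 ω) := by
    funext ω
    rw [hgdef, sq, ← Real.exp_add]
    congr 1; ring
  have hg2_int : Integrable (fun ω => g ω ^ 2) μ := by rw [hg2]; exact hIγ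
  set m := ∫ ω, g ω ∂μ with hmdef
  have hm_pos : 0 < m := integral_exp_pos hIhalf
  have hsq : ∫ ω, g ω ^ 2 ∂μ = 1 := by rw [hg2]; exact hγ1
  have hvar_int : Integrable (fun ω => (g ω - m) ^ 2) μ := by
    have heq : (fun ω => (g ω - m) ^ 2) = fun ω => g ω ^ 2 - 2 * m * g ω + m ^ 2 := by
      funext ω; ring
    rw [heq]
    exact (hg2_int.sub (hIhalf.const_mul _)).add (integrable_const _)
  have hvar : ∫ ω, (g ω - m) ^ 2 ∂μ = 1 - m ^ 2 := by
    have heq : (fun ω => (g ω - m) ^ 2) = fun ω => g ω ^ 2 - 2 * m * g ω + m ^ 2 := by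
      funext ω; ring
    have e1 := integral_add (μ := μ) (f := fun ω => g ω ^ 2 - 2 * m * g ω)
      (g := fun _ => m ^ 2) (hg2_int.sub (hIhalf.const_mul _)) (integrable_const _)
    have e2 := integral_sub (μ := μ) (f := fun ω => g ω ^ 2)
      (g := fun ω => 2 * m * g ω) hg2_int (hIhalf.const_mul _)
    rw [heq, e1, e2, integral_const_mul, hsq, integral_const]
    simp [← hmdef]
    ring
  have hm_le : m ≤ 1 := by
    have h0 : 0 ≤ ∫ ω, (g ω - m) ^ 2 ∂μ := integral_nonneg fun ω => sq_nonneg _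
    nlinarith [hvar]
  rcases lt_or_eq_of_le hm_le with h | h
  · exact h
  · exfalso
    have hv0 : ∫ ω, (g ω - m) ^ 2 ∂μ = 0 := by rw [hvar, h]; ring
    have hae : (fun ω => (g ω - m) ^ 2) =ᵐ[μ] 0 :=
      (integral_eq_zero_iff_of_nonneg (fun ω => sq_nonneg _) hvar_int).1 hv0
    have hX0 : (fun ω => X 0 ω) =ᵐ[μ] (fun _ => (0 : ℝ)) := by
      filter_upwards [hae] with ω hω
      have hg1 : g ω = m := by
        have := sq_eq_zero_iff.1 hω
        linarith [sub_eq_zero.1 this]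
      rw [hgdef] at hg1
      simp only at hg1
      rw [h] at hg1
      have h0 := (Real.exp_eq_one_iff _).1 hg1
      have hγ2 : γ / 2 ≠ 0 := by positivity
      rcases mul_eq_zero.1 h0 with h' | h'
      · exact absurd h' hγ2
      · exact h'
    have : ∫ ω, X 0 ω ∂μ = 0 := by
      rw [integral_congr_ae hX0]; simp
    linarith

private lemma mgf_gt_one (μ : Measure Ω) [IsProbabilityMeasure μ] (X : ℕ → Ω → ℝ)
    (hmeas : ∀ i, Measurable (X i))
    (γ r'' : ℝ) (hγ : 0 < γ) (hr'' : γ < r'')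
    (hγ1 : ∫ ω, Real.exp (γ * X 0 ω) ∂μ = 1)
    (hIγ : Integrable (fun ω => Real.exp (γ * X 0 ω)) μ)
    (hIhalf : Integrable (fun ω => Real.exp (γ / 2 * X 0 ω)) μ)
    (hIr'' : Integrable (fun ω => Real.exp (r'' * X 0 ω)) μ)
    (hρ1 : ∫ ω, Real.exp (γ / 2 * X 0 ω) ∂μ < 1) :
    1 < ∫ ω, Real.exp (r'' * X 0 ω) ∂μ := by
  set ρ := ∫ ω, Real.exp (γ / 2 * X 0 ω) ∂μ with hρdef
  set q := ∫ ω, Real.exp (r'' * X 0 ω) ∂μ with hqdef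
  have hρpos : 0 < ρ := integral_exp_pos hIhalf
  have hqpos : 0 < q := integral_exp_pos hIr''
  set s := (r'' - γ) / (r'' - γ / 2) with hsdef
  have hden : 0 < r'' - γ / 2 := by linarith
  have hs0 : 0 < s := div_pos (by linarith) hden
  have hs1 : s < 1 := (div_lt_one hden).2 (by linarith)
  have hsplit : s * (γ / 2) + (1 - s) * r'' = γ := by
    have h := div_mul_cancel₀ (r'' - γ) hden.ne'
    rw [hsdef]
    linear_combination -h
  have hconj : Real.HolderConjugate (1 / s) (1 / (1 - s)) := by
    rw [Real.holderConjugate_iff]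
    constructor
    · rw [lt_div_iff₀ hs0]; linarith
    · rw [one_div, one_div, inv_inv, inv_inv]; ring
  have hmf : AEMeasurable (fun ω => ENNReal.ofReal (Real.exp (s * (γ / 2) * X 0 ω))) μ :=
    (ENNReal.measurable_ofReal.comp ((Real.measurable_exp).comp ((hmeas 0).const_mul _))).aemeasurable
  have hmg : AEMeasurable (fun ω => ENNReal.ofReal (Real.exp ((1 - s) * r'' * X 0 ω))) μ :=
    (ENNReal.measurable_ofReal.comp ((Real.measurable_exp).comp ((hmeas 0).const_mul _))).aemeasurable
  have hH := ENNReal.lintegral_mul_le_Lp_mul_Lq μ hconj hmf hmg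
  have hLHS : ∫⁻ ω, ((fun ω => ENNReal.ofReal (Real.exp (s * (γ / 2) * X 0 ω))) *
      (fun ω => ENNReal.ofReal (Real.exp ((1 - s) * r'' * X 0 ω)))) ω ∂μ = 1 := by
    have hpt : ∀ ω : Ω, ((fun ω => ENNReal.ofReal (Real.exp (s * (γ / 2) * X 0 ω))) *
        (fun ω => ENNReal.ofReal (Real.exp ((1 - s) * r'' * X 0 ω)))) ω
        = ENNReal.ofReal (Real.exp (γ * X 0 ω)) := by
      intro ω
      rw [Pi.mul_apply, ← ENNReal.ofReal_mul (Real.exp_pos _).le, ← Real.exp_add]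
      congr 2
      linear_combination (X 0 ω) * hsplit
    rw [lintegral_congr hpt, ← ofReal_integral_eq_lintegral_ofReal hIγ
      (Filter.Eventually.of_forall fun ω => (Real.exp_pos _).le), hγ1, ENNReal.ofReal_one]
  rw [hLHS] at hH
  have hfp : ∀ ω : Ω, (fun ω => ENNReal.ofReal (Real.exp (s * (γ / 2) * X 0 ω))) ω ^ (1 / s)
      = ENNReal.ofReal (Real.exp (γ / 2 * X 0 ω)) := by
    intro ω
    rw [ENNReal.ofReal_rpow_of_pos (Real.exp_pos _), ← Real.exp_mul]
    congr 2
    field_simp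
  have hgp : ∀ ω : Ω, (fun ω => ENNReal.ofReal (Real.exp ((1 - s) * r'' * X 0 ω))) ω ^ (1 / (1 - s))
      = ENNReal.ofReal (Real.exp (r'' * X 0 ω)) := by
    intro ω
    rw [ENNReal.ofReal_rpow_of_pos (Real.exp_pos _), ← Real.exp_mul]
    congr 2
    have h1s : 1 - s ≠ 0 := by linarith
    field_simp
  rw [lintegral_congr hfp, lintegral_congr hgp,
    ← ofReal_integral_eq_lintegral_ofReal hIhalf (Filter.Eventually.of_forall fun ω => (Real.exp_pos _).le),
    ← ofReal_integral_eq_lintegral_ofReal hIr'' (Filter.Eventually.of_forall fun ω => (Real.exp_pos _).le),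
    one_div_one_div, one_div_one_div, ← hρdef, ← hqdef,
    ENNReal.ofReal_rpow_of_pos hρpos, ENNReal.ofReal_rpow_of_pos hqpos,
    ← ENNReal.ofReal_mul (Real.rpow_nonneg hρpos.le _)] at hH
  have hreal : (1 : ℝ) ≤ ρ ^ s * q ^ (1 - s) := by
    rw [← ENNReal.ofReal_one] at hH
    exact (ENNReal.ofReal_le_ofReal_iff (by positivity)).1 hH
  by_contra hq
  push_neg at hq
  have h1 : ρ ^ s < 1 := Real.rpow_lt_one hρpos.le hρ1 hs0
  have h2 : q ^ (1 - s) ≤ 1 := Real.rpow_le_one hqpos.le hq (by linarith)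
  nlinarith [Real.rpow_nonneg hqpos.le (1 - s), Real.rpow_nonneg hρpos.le s]

set_option maxHeartbeats 1600000 in
/-- Lemma `lem:estsub`, (est3sub). For a random walk with negative drift
such that `E[e^{γ S_1}] = 1` and exponential moments on `(-η₁, γ + η₂)`: for every `r > γ`
and `α ≥ 0` there is `c'(r, α) > 0` such that for all `a ≥ 0` and `L > 1`,
`E_a[∑_{0 ≤ ℓ < τ_L^+} (1 + L - S_ℓ)^α e^{r S_ℓ}] ≤ c'(r, α) e^{γ(a - L)} e^{r L}`. -/
theorem negative_drift_weighted_sum_bound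
    (μ : Measure Ω) [IsProbabilityMeasure μ]
    (X : ℕ → Ω → ℝ) (hmeas : ∀ i, Measurable (X i))
    (hindep : iIndepFun X μ)
    (hident : ∀ i, IdentDistrib (X i) (X 0) μ μ)
    (hdrift : ∫ ω, X 0 ω ∂μ < 0)
    (γ η₁ η₂ : ℝ) (hγ : 0 < γ) (hη₁ : 0 < η₁) (hη₂ : 0 < η₂)
    (hγ1 : ∫ ω, Real.exp (γ * X 0 ω) ∂μ = 1)
    (hexp : ∀ u : ℝ, -η₁ < u → u < γ + η₂ →
      Integrable (fun ω => Real.exp (u * X 0 ω)) μ)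
    (r : ℝ) (hr : γ < r) (α : ℝ) (hα : 0 ≤ α) :
    ∃ c : ℝ, 0 < c ∧ ∀ a : ℝ, 0 ≤ a → ∀ L : ℝ, 1 < L →
      ∫⁻ ω, ∑' l : ℕ, (if (l : ℕ∞) < hitAbove X a L ω
          then ENNReal.ofReal ((1 + L - walk X a l ω) ^ α * Real.exp (r * walk X a l ω))
          else 0) ∂μ
        ≤ ENNReal.ofReal (c * Real.exp (γ * (a - L)) * Real.exp (r * L)) := by
  classical
  have hδ : 0 < min (min (r - γ) η₂) γ := lt_min (lt_min (by linarith) hη₂) hγ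
  set δ := min (min (r - γ) η₂) γ with hδdef
  have hδ1 : δ ≤ r - γ := le_trans (min_le_left _ _) (min_le_left _ _)
  have hδ2 : δ ≤ η₂ := le_trans (min_le_left _ _) (min_le_right _ _)
  set r'' := γ + δ / 2 with hr''def
  set u := γ + 3 * δ / 4 with hudef
  have h3r : γ + 2 * u = 3 * r'' := by rw [hudef, hr''def]; ring
  have hγr'' : γ < r'' := by rw [hr''def]; linarith
  have hr''u : r'' < u := by rw [hudef, hr''def]; linarith
  have hr''r : r'' < r := by rw [hr''def]; linarith
  have hIγ : Integrable (fun ω => Real.exp (γ * X 0 ω)) μ := hexp γ (by linarith) (by linarith)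
  have hIhalf : Integrable (fun ω => Real.exp (γ / 2 * X 0 ω)) μ :=
    hexp _ (by linarith) (by linarith)
  have hIr'' : Integrable (fun ω => Real.exp (r'' * X 0 ω)) μ := by
    refine hexp _ (by linarith) ?_
    rw [hr''def]; linarith
  have hIu : Integrable (fun ω => Real.exp (u * X 0 ω)) μ := by
    refine hexp _ (by linarith) ?_
    rw [hudef]; linarith
  try clear_value u
  try clear_value r''
  try clear_value δ
  try clear_value u
  try clear_value r''
  try clear_value δ
  set q := ∫ ω, Real.exp (r'' * X 0 ω) ∂μ with hqdef
  set Q := ∫ ω, Real.exp (u * X 0 ω) ∂μ with hQdef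
  have hQpos : 0 < Q := integral_exp_pos hIu
  have hρ1 := mgf_half_lt_one μ X hdrift γ hγ hγ1 hIγ hIhalf
  have hq1 : 1 < q := mgf_gt_one μ X hmeas γ r'' hγ hγr'' hγ1 hIγ hIhalf hIr'' hρ1
  try clear_value q
  try clear_value Q
  set B₂ := 2 / (q - 1) with hB₂def
  have hB₂ : 0 < B₂ := div_pos two_pos (by linarith)
  have hB₂q : B₂ * q = B₂ + 2 := by
    have h := div_mul_cancel₀ (2:ℝ) (show q - 1 ≠ 0 by linarith)
    rw [hB₂def]
    linear_combination h
  set B₃ := 1 / max (Q - 1) 1 with hB₃def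
  have hmax1 : (0:ℝ) < max (Q - 1) 1 := lt_of_lt_of_le one_pos (le_max_right _ _)
  have hB₃ : 0 < B₃ := div_pos one_pos hmax1
  have hB₃Q : (Q - 1) * B₃ ≤ 1 := by
    rw [hB₃def, mul_one_div, div_le_one hmax1]
    exact le_max_left _ _
  set B₁ := 4 * B₂ ^ 3 / (27 * B₃ ^ 2) with hB₁def
  have hB₁ : 0 < B₁ := by positivity
  have hB₁q : B₂ ^ 3 = 27 / 4 * (B₁ * B₃ ^ 2) := by
    rw [hB₁def]; field_simp
  try clear_value B₁
  try clear_value B₃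
  try clear_value B₂
  set c₀ := (r - r'') / (α + 1) with hc₀def
  have hc₀ : 0 < c₀ := div_pos (by linarith) (by linarith)
  have hαc₀ : α * c₀ ≤ r - r'' := by
    rw [hc₀def]
    rw [show α * ((r - r'') / (α + 1)) = (r - r'') * (α / (α + 1)) by ring]
    calc (r - r'') * (α / (α + 1)) ≤ (r - r'') * 1 := by
          apply mul_le_mul_of_nonneg_left _ (by linarith)
          rw [div_le_one (by linarith)]; linarith
      _ = r - r'' := mul_one _
  try clear_value c₀
  set K := (Real.exp c₀ / c₀) ^ α with hKdef
  have hK : 0 < K := Real.rpow_pos_of_pos (by positivity) α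
  try clear_value K
  refine ⟨K * (B₁ + B₃), by positivity, fun a ha L hL => ?_⟩
  by_cases haL : a ≤ L
  swap
  · -- trivial case : the walk starts above the barrier
    push_neg at haL
    have hzero : ∀ ω, (∑' l : ℕ, (if (l : ℕ∞) < hitAbove X a L ω
        then ENNReal.ofReal ((1 + L - walk X a l ω) ^ α * Real.exp (r * walk X a l ω))
        else 0)) = 0 := by
      intro ω
      have h0 : ∀ l : ℕ, (if (l : ℕ∞) < hitAbove X a L ω
          then ENNReal.ofReal ((1 + L - walk X a l ω) ^ α * Real.exp (r * walk X a l ω))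
          else 0) = 0 := by
        intro l
        rw [if_neg]
        intro h
        have h1 := lt_hitAbove_iff.1 h 0 (Nat.zero_le l)
        have hw : walk X a 0 ω = a := by simp [walk]
        rw [hw] at h1
        linarith
      simp only [h0]
      exact tsum_zero
    have h0 : (∫⁻ ω, ∑' l : ℕ, (if (l : ℕ∞) < hitAbove X a L ω
        then ENNReal.ofReal ((1 + L - walk X a l ω) ^ α * Real.exp (r * walk X a l ω))
        else 0) ∂μ) = 0 := (lintegral_congr hzero).trans lintegral_zero
    exact h0.trans_le (zero_le)
  -- main case
  have hMle : ∀ l : ℕ,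
      (⨆ i ∈ {i : ℕ | i < l}, MeasurableSpace.comap (X i) inferInstance) ≤ ‹MeasurableSpace Ω› :=
    fun l => iSup₂_le fun i _ => measurable_iff_comap_le.1 (hmeas i)
  have hwalk_meas : ∀ n : ℕ, Measurable (walk X a n) := fun n =>
    (measurable_walk_sup X a (le_refl n)).mono (hMle n) le_rfl
  set A : ℕ → Set Ω := fun l => {ω | ∀ k ≤ l, walk X a k ω ≤ L} with hAdef
  have hA_meas : ∀ l, MeasurableSet (A l) := fun l => hMle l _ (measurable_event_sup X a L l)
  have hA_succ : ∀ l, A (l + 1) ⊆ A l := fun l ω hω k hk => hω k (le_trans hk (Nat.le_succ l))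
  have hA_walk : ∀ l, ∀ ω ∈ A l, walk X a l ω ≤ L := fun l ω hω => hω l le_rfl
  have hA_iff : ∀ (l : ℕ) (ω : Ω), ((l : ℕ∞) < hitAbove X a L ω) ↔ ω ∈ A l :=
    fun l ω => lt_hitAbove_iff
  try clear_value A
  have hIND : ∀ (θ : ℝ) (l m : ℕ), Measurable (fun ω =>
      (A l).indicator (fun ω' => ENNReal.ofReal (Real.exp (θ * walk X a m ω'))) ω) := fun θ l m =>
    (ENNReal.measurable_ofReal.comp (Real.measurable_exp.comp
      ((hwalk_meas m).const_mul θ))).indicator (hA_meas l)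
  -- single-step moment generating factors
  have hmgf : ∀ θ : ℝ, Integrable (fun ω => Real.exp (θ * X 0 ω)) μ → ∀ l : ℕ,
      ∫⁻ ω, ENNReal.ofReal (Real.exp (θ * X l ω)) ∂μ
        = ENNReal.ofReal (∫ ω, Real.exp (θ * X 0 ω) ∂μ) := by
    intro θ hθ l
    have hcomp : Measurable (fun x : ℝ => ENNReal.ofReal (Real.exp (θ * x))) :=
      ENNReal.measurable_ofReal.comp (Real.measurable_exp.comp (measurable_id.const_mul θ))
    have hid := (hident l).comp hcomp
    calc ∫⁻ ω, ENNReal.ofReal (Real.exp (θ * X l ω)) ∂μ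
        = ∫⁻ ω, ENNReal.ofReal (Real.exp (θ * X 0 ω)) ∂μ := by
          have h := hid.lintegral_eq
          simpa [Function.comp] using h
      _ = ENNReal.ofReal (∫ ω, Real.exp (θ * X 0 ω) ∂μ) :=
          (ofReal_integral_eq_lintegral_ofReal hθ
            (Filter.Eventually.of_forall fun ω => (Real.exp_pos _).le)).symm
  -- independence factorization
  have hfact : ∀ (θ : ℝ) (l : ℕ) (B : Set Ω),
      MeasurableSet[⨆ i ∈ {i : ℕ | i < l}, MeasurableSpace.comap (X i) inferInstance] B →
      ∫⁻ ω, B.indicator (fun ω' => ENNReal.ofReal (Real.exp (θ * walk X a (l + 1) ω'))) ω ∂μ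
        = (∫⁻ ω, B.indicator (fun ω' => ENNReal.ofReal (Real.exp (θ * walk X a l ω'))) ω ∂μ)
          * ∫⁻ ω, ENNReal.ofReal (Real.exp (θ * X l ω)) ∂μ := by
    intro θ l B hB
    have hpt : ∀ ω, B.indicator (fun ω' => ENNReal.ofReal (Real.exp (θ * walk X a (l + 1) ω'))) ω
        = B.indicator (fun ω' => ENNReal.ofReal (Real.exp (θ * walk X a l ω'))) ω
          * ENNReal.ofReal (Real.exp (θ * X l ω)) := by
      intro ω
      by_cases hω : ω ∈ B
      · rw [Set.indicator_of_mem hω, Set.indicator_of_mem hω,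
          ← ENNReal.ofReal_mul (Real.exp_pos _).le, ← Real.exp_add]
        congr 2
        rw [walk_succ]
        ring
      · rw [Set.indicator_of_notMem hω, Set.indicator_of_notMem hω, zero_mul]
    rw [lintegral_congr hpt]
    exact indep_factor μ X hmeas hindep l
      (Measurable.indicator (ENNReal.measurable_ofReal.comp (Real.measurable_exp.comp
        ((measurable_walk_sup X a (le_refl l)).const_mul θ))) hB)
      (ENNReal.measurable_ofReal.comp (Real.measurable_exp.comp
        ((Measurable.of_comap_le le_rfl).const_mul θ)))
  -- finiteness of exponential moments of the walk
  have hfin : ∀ θ : ℝ, Integrable (fun ω => Real.exp (θ * X 0 ω)) μ → ∀ l : ℕ,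
      ∫⁻ ω, ENNReal.ofReal (Real.exp (θ * walk X a l ω)) ∂μ < ⊤ := by
    intro θ hθ l
    induction l with
    | zero =>
      have heq : (fun ω => ENNReal.ofReal (Real.exp (θ * walk X a 0 ω)))
          = fun _ => ENNReal.ofReal (Real.exp (θ * a)) := by
        funext ω; simp [walk]
      rw [heq, lintegral_const]
      simp [measure_univ]
    | succ n ih =>
      have h1 := hfact θ n Set.univ MeasurableSet.univ
      simp only [Set.indicator_univ] at h1
      rw [h1, hmgf θ hθ n]
      exact ENNReal.mul_lt_top ih ENNReal.ofReal_lt_top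
  -- the potential function
  set fL : ℝ → ℝ := fun x => B₁ * Real.exp ((r'' - γ) * L) * Real.exp (γ * x)
      + B₃ * Real.exp ((r'' - u) * L) * Real.exp (u * x) - B₂ * Real.exp (r'' * x) with hfLdef
  have hfL_meas : Measurable fL := by
    rw [hfLdef]
    exact (((Real.measurable_exp.comp (measurable_id.const_mul γ)).const_mul _).add
      ((Real.measurable_exp.comp (measurable_id.const_mul u)).const_mul _)).sub
      ((Real.measurable_exp.comp (measurable_id.const_mul r'')).const_mul _)
  have hkey : ∀ x : ℝ, fL x + B₂ * Real.exp (r'' * x)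
      = B₁ * Real.exp ((r'' - γ) * L) * Real.exp (γ * x)
        + B₃ * Real.exp ((r'' - u) * L) * Real.exp (u * x) := by
    intro x; rw [hfLdef]; ring
  have hfL0 : ∀ x : ℝ, 0 ≤ fL x := by
    intro x
    have e3 : Real.exp (r'' * x) ^ 3 = Real.exp (3 * (r'' * x)) := by
      rw [show (3:ℝ) * (r'' * x) = r'' * x + r'' * x + r'' * x by ring,
        Real.exp_add, Real.exp_add]; ring
    have hexp_eq : Real.exp (3 * (r'' * x)) = Real.exp ((r'' - γ) * L) * Real.exp (γ * x)
        * Real.exp ((r'' - u) * L) ^ 2 * Real.exp (u * x) ^ 2 := by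
      rw [sq, sq, ← Real.exp_add, ← Real.exp_add, ← Real.exp_add, ← Real.exp_add, ← Real.exp_add]
      congr 1
      linear_combination (L - x) * h3r
    have hcube : (B₂ * Real.exp (r'' * x)) ^ 3
        = 27 / 4 * ((B₁ * Real.exp ((r'' - γ) * L) * Real.exp (γ * x))
          * (B₃ * Real.exp ((r'' - u) * L) * Real.exp (u * x)) ^ 2) := by
      calc (B₂ * Real.exp (r'' * x)) ^ 3 = B₂ ^ 3 * Real.exp (r'' * x) ^ 3 := by ring
        _ = 27 / 4 * (B₁ * B₃ ^ 2) * (Real.exp ((r'' - γ) * L) * Real.exp (γ * x)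
            * Real.exp ((r'' - u) * L) ^ 2 * Real.exp (u * x) ^ 2) := by
              rw [e3, hexp_eq, hB₁q]
              try ring
        _ = 27 / 4 * ((B₁ * Real.exp ((r'' - γ) * L) * Real.exp (γ * x))
            * (B₃ * Real.exp ((r'' - u) * L) * Real.exp (u * x)) ^ 2) := by ring
    have hle := amgm_aux (by positivity) (by positivity) hcube
    rw [hfLdef]
    simp only
    linarith
  have hfml_meas : ∀ l m : ℕ, Measurable (fun ω =>
      (A l).indicator (fun ω' => ENNReal.ofReal (fL (walk X a m ω'))) ω) := fun l m =>
    (ENNReal.measurable_ofReal.comp (hfL_meas.comp (hwalk_meas m))).indicator (hA_meas l)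
  try clear_value fL
  -- the splitting identity
  have hsplit : ∀ l m : ℕ,
      (∫⁻ ω, (A l).indicator (fun ω' => ENNReal.ofReal (fL (walk X a m ω'))) ω ∂μ)
        + ENNReal.ofReal B₂
          * (∫⁻ ω, (A l).indicator (fun ω' => ENNReal.ofReal (Real.exp (r'' * walk X a m ω'))) ω ∂μ)
      = ENNReal.ofReal (B₁ * Real.exp ((r'' - γ) * L))
          * (∫⁻ ω, (A l).indicator (fun ω' => ENNReal.ofReal (Real.exp (γ * walk X a m ω'))) ω ∂μ)
        + ENNReal.ofReal (B₃ * Real.exp ((r'' - u) * L))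
          * (∫⁻ ω, (A l).indicator (fun ω' => ENNReal.ofReal (Real.exp (u * walk X a m ω'))) ω ∂μ) := by
    intro l m
    rw [← lintegral_const_mul _ (hIND r'' l m), ← lintegral_const_mul _ (hIND γ l m),
      ← lintegral_const_mul _ (hIND u l m), ← lintegral_add_left (hfml_meas l m),
      ← lintegral_add_left ((hIND γ l m).const_mul _)]
    apply lintegral_congr
    intro ω
    by_cases hω : ω ∈ A l
    · simp only [Set.indicator_of_mem hω]
      rw [← ENNReal.ofReal_mul hB₂.le,
        ← ENNReal.ofReal_mul (show (0:ℝ) ≤ B₁ * Real.exp ((r'' - γ) * L) by positivity),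
        ← ENNReal.ofReal_mul (show (0:ℝ) ≤ B₃ * Real.exp ((r'' - u) * L) by positivity),
        ← ENNReal.ofReal_add (hfL0 _) (by positivity),
        ← ENNReal.ofReal_add (by positivity) (by positivity)]
      exact congrArg ENNReal.ofReal (hkey _)
    · simp [Set.indicator_of_notMem hω]
  -- the key one-step inequality
  have hstep3 : ∀ l : ℕ,
      (∫⁻ ω, (A l).indicator (fun ω' => ENNReal.ofReal (Real.exp (r'' * walk X a l ω'))) ω ∂μ)
        + (∫⁻ ω, (A (l + 1)).indicator (fun ω' => ENNReal.ofReal (fL (walk X a (l + 1) ω'))) ω ∂μ)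
      ≤ ∫⁻ ω, (A l).indicator (fun ω' => ENNReal.ofReal (fL (walk X a l ω'))) ω ∂μ := by
    intro l
    have e1 := hsplit l l
    have e2 := hsplit l (l + 1)
    have hmeasA : MeasurableSet[⨆ i ∈ {i : ℕ | i < l},
        MeasurableSpace.comap (X i) inferInstance] (A l) := by
      rw [hAdef]; exact measurable_event_sup X a L l
    have hJr := hfact r'' l (A l) hmeasA
    have hJγ := hfact γ l (A l) hmeasA
    have hJu := hfact u l (A l) hmeasA
    rw [hmgf r'' hIr'' l, ← hqdef] at hJr
    rw [hmgf γ hIγ l, hγ1, ENNReal.ofReal_one, mul_one] at hJγ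
    rw [hmgf u hIu l, ← hQdef] at hJu
    rw [hJr, hJγ, hJu] at e2
    set x := ∫⁻ ω, (A l).indicator
      (fun ω' => ENNReal.ofReal (Real.exp (r'' * walk X a l ω'))) ω ∂μ with hxdef
    set y := ∫⁻ ω, (A l).indicator
      (fun ω' => ENNReal.ofReal (Real.exp (γ * walk X a l ω'))) ω ∂μ with hydef
    set z := ∫⁻ ω, (A l).indicator
      (fun ω' => ENNReal.ofReal (Real.exp (u * walk X a l ω'))) ω ∂μ with hzdef
    set P := ∫⁻ ω, (A l).indicator (fun ω' => ENNReal.ofReal (fL (walk X a l ω'))) ω ∂μ with hPdef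
    set S := ∫⁻ ω, (A l).indicator
      (fun ω' => ENNReal.ofReal (fL (walk X a (l + 1) ω'))) ω ∂μ with hSdef
    have hxfin : x ≠ ⊤ := by
      refine (lt_of_le_of_lt (lintegral_mono fun ω =>
        Set.indicator_le_self' (fun _ _ => zero_le) ω) (hfin r'' hIr'' l)).ne
    have hyfin : y ≠ ⊤ := by
      refine (lt_of_le_of_lt (lintegral_mono fun ω =>
        Set.indicator_le_self' (fun _ _ => zero_le) ω) (hfin γ hIγ l)).ne
    have hzfin : z ≠ ⊤ := by
      refine (lt_of_le_of_lt (lintegral_mono fun ω =>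
        Set.indicator_le_self' (fun _ _ => zero_le) ω) (hfin u hIu l)).ne
    -- monotonicity in the indicator
    have hΦmono : (∫⁻ ω, (A (l + 1)).indicator
        (fun ω' => ENNReal.ofReal (fL (walk X a (l + 1) ω'))) ω ∂μ) ≤ S :=
      lintegral_mono fun ω =>
        Set.indicator_le_indicator_of_subset (hA_succ l) (fun _ => zero_le) ω
    refine le_trans (add_le_add_right hΦmono x) ?_
    -- key geometric comparison : e^{(r''-u)L} e^{u w} ≤ e^{r'' w} for w ≤ L
    have subkey : ENNReal.ofReal (Q - 1) * (ENNReal.ofReal (B₃ * Real.exp ((r'' - u) * L)) * z)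
        ≤ x := by
      rcases le_or_gt Q 1 with hQ1 | hQ1
      · rw [ENNReal.ofReal_eq_zero.2 (by linarith), zero_mul]
        exact zero_le
      · rw [← mul_assoc, ← ENNReal.ofReal_mul (by linarith), hxdef, hzdef,
          ← lintegral_const_mul _ (hIND u l l)]
        apply lintegral_mono
        intro ω
        by_cases hω : ω ∈ A l
        · simp only [Set.indicator_of_mem hω]
          rw [← ENNReal.ofReal_mul (mul_nonneg (by linarith) (by positivity))]
          apply ENNReal.ofReal_le_ofReal
          have hwL : walk X a l ω ≤ L := hA_walk l ω hω
          have hE : Real.exp ((r'' - u) * L + u * walk X a l ω) ≤ Real.exp (r'' * walk X a l ω) := by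
            apply Real.exp_le_exp.2
            nlinarith [mul_nonneg (show (0:ℝ) ≤ u - r'' by linarith)
              (show (0:ℝ) ≤ L - walk X a l ω by linarith)]
          calc (Q - 1) * (B₃ * Real.exp ((r'' - u) * L)) * Real.exp (u * walk X a l ω)
              = ((Q - 1) * B₃) * Real.exp ((r'' - u) * L + u * walk X a l ω) := by
                rw [Real.exp_add]; ring
            _ ≤ 1 * Real.exp (r'' * walk X a l ω) :=
                mul_le_mul hB₃Q hE (Real.exp_pos _).le zero_le_one
            _ = Real.exp (r'' * walk X a l ω) := one_mul _
        · simp [Set.indicator_of_notMem hω]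
    have key1 : ENNReal.ofReal (B₃ * Real.exp ((r'' - u) * L)) * (z * ENNReal.ofReal Q)
        ≤ ENNReal.ofReal (B₃ * Real.exp ((r'' - u) * L)) * z + x := by
      have hQle : ENNReal.ofReal Q ≤ 1 + ENNReal.ofReal (Q - 1) := by
        calc ENNReal.ofReal Q = ENNReal.ofReal (1 + (Q - 1)) := by norm_num
          _ ≤ ENNReal.ofReal 1 + ENNReal.ofReal (Q - 1) := ENNReal.ofReal_add_le
          _ = 1 + ENNReal.ofReal (Q - 1) := by rw [ENNReal.ofReal_one]
      calc ENNReal.ofReal (B₃ * Real.exp ((r'' - u) * L)) * (z * ENNReal.ofReal Q)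
          ≤ ENNReal.ofReal (B₃ * Real.exp ((r'' - u) * L)) * (z * (1 + ENNReal.ofReal (Q - 1))) :=
            mul_le_mul_right (mul_le_mul_right hQle z) _
        _ = ENNReal.ofReal (B₃ * Real.exp ((r'' - u) * L)) * z
            + ENNReal.ofReal (Q - 1) * (ENNReal.ofReal (B₃ * Real.exp ((r'' - u) * L)) * z) := by
            ring
        _ ≤ ENNReal.ofReal (B₃ * Real.exp ((r'' - u) * L)) * z + x := add_le_add_right subkey _
    have key2 : ENNReal.ofReal B₂ * (x * ENNReal.ofReal q)
        = ENNReal.ofReal B₂ * x + (x + x) := by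
      calc ENNReal.ofReal B₂ * (x * ENNReal.ofReal q)
          = (ENNReal.ofReal B₂ * ENNReal.ofReal q) * x := by ring
        _ = ENNReal.ofReal (B₂ * q) * x := by rw [ENNReal.ofReal_mul hB₂.le]
        _ = (ENNReal.ofReal B₂ + ENNReal.ofReal 2) * x := by
            rw [hB₂q, ENNReal.ofReal_add hB₂.le (by norm_num)]
        _ = ENNReal.ofReal B₂ * x + (x + x) := by
            rw [show ENNReal.ofReal (2:ℝ) = 2 by norm_num]
            ring
    have h5 : S + ENNReal.ofReal B₂ * x + (x + x) ≤ P + ENNReal.ofReal B₂ * x + x := by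
      calc S + ENNReal.ofReal B₂ * x + (x + x)
          = S + ENNReal.ofReal B₂ * (x * ENNReal.ofReal q) := by rw [key2]; ring
        _ = ENNReal.ofReal (B₁ * Real.exp ((r'' - γ) * L)) * y
            + ENNReal.ofReal (B₃ * Real.exp ((r'' - u) * L)) * (z * ENNReal.ofReal Q) := e2
        _ ≤ ENNReal.ofReal (B₁ * Real.exp ((r'' - γ) * L)) * y
            + (ENNReal.ofReal (B₃ * Real.exp ((r'' - u) * L)) * z + x) := add_le_add_right key1 _
        _ = (ENNReal.ofReal (B₁ * Real.exp ((r'' - γ) * L)) * y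
            + ENNReal.ofReal (B₃ * Real.exp ((r'' - u) * L)) * z) + x := by ring
        _ = (P + ENNReal.ofReal B₂ * x) + x := by rw [← e1]
        _ = P + ENNReal.ofReal B₂ * x + x := by ring
    have hfin2 : ENNReal.ofReal B₂ * x + x ≠ ⊤ :=
      ENNReal.add_ne_top.2 ⟨ENNReal.mul_ne_top ENNReal.ofReal_ne_top hxfin, hxfin⟩
    have h6 : S + x + (ENNReal.ofReal B₂ * x + x) ≤ P + (ENNReal.ofReal B₂ * x + x) := by
      calc S + x + (ENNReal.ofReal B₂ * x + x) = S + ENNReal.ofReal B₂ * x + (x + x) := by ring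
        _ ≤ P + ENNReal.ofReal B₂ * x + x := h5
        _ = P + (ENNReal.ofReal B₂ * x + x) := by ring
    have h7 := (ENNReal.add_le_add_iff_right hfin2).1 h6
    calc x + S = S + x := by ring
      _ ≤ P := h7
  -- telescoping sum
  have htsum : (∑' l : ℕ, ∫⁻ ω, (A l).indicator
      (fun ω' => ENNReal.ofReal (Real.exp (r'' * walk X a l ω'))) ω ∂μ)
      ≤ ENNReal.ofReal (fL a) := by
    have hsum : ∀ N : ℕ, (∑ l ∈ Finset.range N, ∫⁻ ω, (A l).indicator
        (fun ω' => ENNReal.ofReal (Real.exp (r'' * walk X a l ω'))) ω ∂μ)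
        + (∫⁻ ω, (A N).indicator (fun ω' => ENNReal.ofReal (fL (walk X a N ω'))) ω ∂μ)
        ≤ ∫⁻ ω, (A 0).indicator (fun ω' => ENNReal.ofReal (fL (walk X a 0 ω'))) ω ∂μ := by
      intro N
      induction N with
      | zero => simp
      | succ n ih =>
        rw [Finset.sum_range_succ]
        calc (∑ l ∈ Finset.range n, ∫⁻ ω, (A l).indicator
              (fun ω' => ENNReal.ofReal (Real.exp (r'' * walk X a l ω'))) ω ∂μ)
            + (∫⁻ ω, (A n).indicator
              (fun ω' => ENNReal.ofReal (Real.exp (r'' * walk X a n ω'))) ω ∂μ)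
            + (∫⁻ ω, (A (n + 1)).indicator
              (fun ω' => ENNReal.ofReal (fL (walk X a (n + 1) ω'))) ω ∂μ)
            = (∑ l ∈ Finset.range n, ∫⁻ ω, (A l).indicator
              (fun ω' => ENNReal.ofReal (Real.exp (r'' * walk X a l ω'))) ω ∂μ)
            + ((∫⁻ ω, (A n).indicator
              (fun ω' => ENNReal.ofReal (Real.exp (r'' * walk X a n ω'))) ω ∂μ)
            + (∫⁻ ω, (A (n + 1)).indicator
              (fun ω' => ENNReal.ofReal (fL (walk X a (n + 1) ω'))) ω ∂μ)) := by ring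
          _ ≤ (∑ l ∈ Finset.range n, ∫⁻ ω, (A l).indicator
              (fun ω' => ENNReal.ofReal (Real.exp (r'' * walk X a l ω'))) ω ∂μ)
            + (∫⁻ ω, (A n).indicator (fun ω' => ENNReal.ofReal (fL (walk X a n ω'))) ω ∂μ) :=
              add_le_add_right (hstep3 n) _
          _ ≤ _ := ih
    have hΦ0 : (∫⁻ ω, (A 0).indicator (fun ω' => ENNReal.ofReal (fL (walk X a 0 ω'))) ω ∂μ)
        ≤ ENNReal.ofReal (fL a) := by
      have hb : ∀ ω : Ω, (A 0).indicator (fun ω' => ENNReal.ofReal (fL (walk X a 0 ω'))) ω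
          ≤ ENNReal.ofReal (fL a) := by
        intro ω
        by_cases hω : ω ∈ A 0
        · rw [Set.indicator_of_mem hω]
          apply le_of_eq
          congr 1
          simp [walk]
        · rw [Set.indicator_of_notMem hω]
          exact zero_le
      calc (∫⁻ ω, (A 0).indicator (fun ω' => ENNReal.ofReal (fL (walk X a 0 ω'))) ω ∂μ)
          ≤ ∫⁻ _ω, ENNReal.ofReal (fL a) ∂μ := lintegral_mono hb
        _ = ENNReal.ofReal (fL a) := by rw [lintegral_const, measure_univ, mul_one]
    rw [ENNReal.tsum_eq_iSup_sum]
    apply iSup_le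
    intro s
    obtain ⟨N, hN⟩ := s.exists_nat_subset_range
    calc (∑ l ∈ s, ∫⁻ ω, (A l).indicator
          (fun ω' => ENNReal.ofReal (Real.exp (r'' * walk X a l ω'))) ω ∂μ)
        ≤ ∑ l ∈ Finset.range N, ∫⁻ ω, (A l).indicator
          (fun ω' => ENNReal.ofReal (Real.exp (r'' * walk X a l ω'))) ω ∂μ :=
          Finset.sum_le_sum_of_subset hN
      _ ≤ ∫⁻ ω, (A 0).indicator (fun ω' => ENNReal.ofReal (fL (walk X a 0 ω'))) ω ∂μ :=
          le_trans le_self_add (hsum N)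
      _ ≤ ENNReal.ofReal (fL a) := hΦ0
  -- pointwise domination of the summands
  have hrw : ∀ (l : ℕ) (ω : Ω), (if (l : ℕ∞) < hitAbove X a L ω
      then ENNReal.ofReal ((1 + L - walk X a l ω) ^ α * Real.exp (r * walk X a l ω)) else 0)
      = (A l).indicator (fun ω' => ENNReal.ofReal
        ((1 + L - walk X a l ω') ^ α * Real.exp (r * walk X a l ω'))) ω := by
    intro l ω
    rw [Set.indicator_apply]
    exact if_congr (hA_iff l ω) rfl rfl
  have hIND2 : ∀ l : ℕ, Measurable (fun ω => (A l).indicator (fun ω' => ENNReal.ofReal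
      ((1 + L - walk X a l ω') ^ α * Real.exp (r * walk X a l ω'))) ω) := by
    intro l
    refine Measurable.indicator ?_ (hA_meas l)
    apply ENNReal.measurable_ofReal.comp
    exact (((continuous_rpow_const hα).measurable.comp
      (measurable_const.sub (hwalk_meas l))).mul
      (Real.measurable_exp.comp ((hwalk_meas l).const_mul r)))
  calc ∫⁻ ω, ∑' l : ℕ, (if (l : ℕ∞) < hitAbove X a L ω
        then ENNReal.ofReal ((1 + L - walk X a l ω) ^ α * Real.exp (r * walk X a l ω)) else 0) ∂μ
      = ∑' l : ℕ, ∫⁻ ω, (A l).indicator (fun ω' => ENNReal.ofReal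
        ((1 + L - walk X a l ω') ^ α * Real.exp (r * walk X a l ω'))) ω ∂μ := by
        rw [lintegral_congr (fun ω => tsum_congr fun l => hrw l ω)]
        exact lintegral_tsum fun l => (hIND2 l).aemeasurable
    _ ≤ ∑' l : ℕ, (ENNReal.ofReal (K * Real.exp ((r - r'') * L))
        * ∫⁻ ω, (A l).indicator
          (fun ω' => ENNReal.ofReal (Real.exp (r'' * walk X a l ω'))) ω ∂μ) := by
        refine ENNReal.tsum_le_tsum fun l => ?_
        rw [← lintegral_const_mul _ (hIND r'' l l)]
        refine lintegral_mono fun ω => ?_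
        by_cases hω : ω ∈ A l
        · simp only [Set.indicator_of_mem hω]
          rw [← ENNReal.ofReal_mul (by positivity)]
          apply ENNReal.ofReal_le_ofReal
          have hwL : walk X a l ω ≤ L := hA_walk l ω hω
          have ht : (0:ℝ) ≤ L - walk X a l ω := by linarith
          have h1 : (1 + (L - walk X a l ω)) ^ α
              ≤ K * Real.exp (α * (c₀ * (L - walk X a l ω))) := by
            rw [hKdef]
            exact one_add_rpow_le hα hc₀ ht
          have h2 : Real.exp (α * (c₀ * (L - walk X a l ω)))
              ≤ Real.exp ((r - r'') * (L - walk X a l ω)) := by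
            apply Real.exp_le_exp.2
            nlinarith [mul_le_mul_of_nonneg_right hαc₀ ht]
          calc (1 + L - walk X a l ω) ^ α * Real.exp (r * walk X a l ω)
              = (1 + (L - walk X a l ω)) ^ α * Real.exp (r * walk X a l ω) := by ring_nf
            _ ≤ (K * Real.exp ((r - r'') * (L - walk X a l ω))) * Real.exp (r * walk X a l ω) := by
                apply mul_le_mul_of_nonneg_right _ (Real.exp_pos _).le
                exact le_trans h1 (mul_le_mul_of_nonneg_left h2 hK.le)
            _ = K * Real.exp ((r - r'') * L) * Real.exp (r'' * walk X a l ω) := by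
                rw [mul_assoc, mul_assoc, ← Real.exp_add, ← Real.exp_add]
                congr 2
                ring
        · simp [Set.indicator_of_notMem hω]
    _ = ENNReal.ofReal (K * Real.exp ((r - r'') * L))
        * ∑' l : ℕ, ∫⁻ ω, (A l).indicator
          (fun ω' => ENNReal.ofReal (Real.exp (r'' * walk X a l ω'))) ω ∂μ :=
        ENNReal.tsum_mul_left
    _ ≤ ENNReal.ofReal (K * Real.exp ((r - r'') * L)) * ENNReal.ofReal (fL a) :=
        mul_le_mul_right htsum _
    _ = ENNReal.ofReal (K * Real.exp ((r - r'') * L) * fL a) :=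
        (ENNReal.ofReal_mul (by positivity)).symm
    _ ≤ ENNReal.ofReal (K * (B₁ + B₃) * Real.exp (γ * (a - L)) * Real.exp (r * L)) := by
        apply ENNReal.ofReal_le_ofReal
        have hexpeq : Real.exp ((r - r'') * L) * (Real.exp ((r'' - γ) * L) * Real.exp (γ * a))
            = Real.exp (γ * (a - L)) * Real.exp (r * L) := by
          rw [← Real.exp_add, ← Real.exp_add, ← Real.exp_add]
          congr 1
          ring
        have hterm : B₃ * Real.exp ((r'' - u) * L) * Real.exp (u * a)
            ≤ B₃ * (Real.exp ((r'' - γ) * L) * Real.exp (γ * a)) := by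
          rw [mul_assoc, ← Real.exp_add, ← Real.exp_add]
          apply mul_le_mul_of_nonneg_left _ hB₃.le
          apply Real.exp_le_exp.2
          nlinarith [mul_le_mul_of_nonneg_left haL (show (0:ℝ) ≤ u - γ by linarith)]
        have hfa : fL a ≤ (B₁ + B₃) * (Real.exp ((r'' - γ) * L) * Real.exp (γ * a)) := by
          rw [hfLdef]
          simp only
          nlinarith [hterm, Real.exp_pos (r'' * a), hB₂,
            mul_pos hB₂ (Real.exp_pos (r'' * a))]
        calc K * Real.exp ((r - r'') * L) * fL a
            ≤ K * Real.exp ((r - r'') * L)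
              * ((B₁ + B₃) * (Real.exp ((r'' - γ) * L) * Real.exp (γ * a))) := by
              apply mul_le_mul_of_nonneg_left hfa (by positivity)
          _ = K * (B₁ + B₃) * (Real.exp ((r - r'') * L)
              * (Real.exp ((r'' - γ) * L) * Real.exp (γ * a))) := by ring
          _ = K * (B₁ + B₃) * (Real.exp (γ * (a - L)) * Real.exp (r * L)) := by rw [hexpeq]
          _ = K * (B₁ + B₃) * Real.exp (γ * (a - L)) * Real.exp (r * L) := by ring
end

section
/- Let (S_n) be a real random walk with negative drift E[S_1] < 0 such that E[e^{γ S_1}] = 1 for some γ > 0 and E[e^{u S_1}] < ∞ for all u ∈ (−η₁, γ + η₂), for some η₁, η₂ > 0. Then for every α ≥ 0 there is a constant c'' > 0 such that for all L > 1 and all a ∈ [0, L]: E_a[ ∑_{ℓ=0}^{min(τ_0^-, τ_L^+)} (1 + L − S_ℓ)^α e^{γ S_ℓ} ] ≤ c'' · e^{γ a} · (1 + L − a)^{1+α}. -/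
open MeasureTheory ProbabilityTheory Filter Topology Real
open scoped ENNReal NNReal

variable {Ω : Type*} [MeasurableSpace Ω]

section AuxAnalysis

lemma aux_exp_mul_one_sub_le (x : ℝ) : Real.exp x * (1 - x) ≤ 1 := by
  have h : 1 - x ≤ Real.exp (-x) := by
    have := Real.add_one_le_exp (-x); linarith
  calc Real.exp x * (1 - x) ≤ Real.exp x * Real.exp (-x) := by
        apply mul_le_mul_of_nonneg_left h (Real.exp_pos x).le
    _ = 1 := by rw [← Real.exp_add]; simp

lemma aux_exp_rpow (x y : ℝ) : (Real.exp x) ^ y = Real.exp (x * y) := by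
  rw [Real.rpow_def_of_pos (Real.exp_pos x), Real.log_exp]

lemma aux_L1a {α v : ℝ} (hα : 0 ≤ α) (hv : 0 ≤ v) :
    (1 + v) ^ α ≤ 1 + α * v * (1 + v) ^ α := by
  have hB : (0:ℝ) ≤ (1 + v) ^ α := Real.rpow_nonneg (by linarith) _
  rcases le_or_gt 1 (α * v) with h | h
  · nlinarith
  · have h1 : (1 + v) ^ α ≤ Real.exp (α * v) := by
      calc (1 + v) ^ α ≤ (Real.exp v) ^ α := by
            apply Real.rpow_le_rpow (by linarith) _ hα
            have := Real.add_one_le_exp v; linarith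
        _ = Real.exp (v * α) := aux_exp_rpow v α
        _ = Real.exp (α * v) := by ring_nf
    have h2 : Real.exp (α * v) * (1 - α * v) ≤ 1 := aux_exp_mul_one_sub_le _
    nlinarith

lemma aux_exp_neg_le (x : ℝ) (hx : 0 ≤ x) : Real.exp (-x) ≤ 1 - x + x ^ 2 := by
  have h1 : Real.exp (-x) * (1 + x) ≤ 1 := by
    have := aux_exp_mul_one_sub_le (-x); simpa using this
  have h2 : (0:ℝ) < Real.exp (-x) := Real.exp_pos _
  nlinarith

/-- Key pointwise inequality. -/
lemma aux_key_pointwise {α r : ℝ} (hα : 0 ≤ α) (hr : r ≤ 1) :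
    (1 - r) ^ (1 + α) ≤ 1 - (1 + α) * r + α * (1 + α) * r ^ 2 * (1 + |r|) ^ α := by
  have h1α : (1:ℝ) + α ≠ 0 := by positivity
  rcases le_or_gt 0 r with h0 | h0
  · -- 0 ≤ r ≤ 1
    have hq : (0:ℝ) ≤ 1 - r := by linarith
    have habs : |r| = r := abs_of_nonneg h0
    have hsplit : (1 - r) ^ (1 + α) = (1 - r) * (1 - r) ^ α :=
      Real.rpow_one_add' hq h1α
    have hqa : (1 - r) ^ α ≤ 1 - α * r + (α * r) ^ 2 := by
      calc (1 - r) ^ α ≤ (Real.exp (-r)) ^ α := by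
            apply Real.rpow_le_rpow hq _ hα
            have := Real.add_one_le_exp (-r); linarith
        _ = Real.exp (-(α * r)) := by rw [aux_exp_rpow]; ring_nf
        _ ≤ 1 - α * r + (α * r) ^ 2 := aux_exp_neg_le _ (by positivity)
    have hone : (1:ℝ) ≤ (1 + |r|) ^ α := Real.one_le_rpow (by simp [habs]; linarith) hα
    have hmul : (1 - r) * (1 - r) ^ α ≤ (1 - r) * (1 - α * r + (α * r) ^ 2) :=
      mul_le_mul_of_nonneg_left hqa hq
    rw [hsplit]
    nlinarith [sq_nonneg r, mul_nonneg (mul_nonneg hα (by linarith : (0:ℝ) ≤ 1 + α)) (sq_nonneg r)]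
  · -- r < 0
    set v := -r with hv
    have hv0 : 0 < v := by simp [hv]; linarith
    have habs : |r| = v := abs_of_neg h0
    have hBpos : (0:ℝ) ≤ (1 + v) ^ α := Real.rpow_nonneg (by linarith) _
    have hB := aux_L1a hα hv0.le
    have hsplit : (1 + v) ^ (1 + α) = (1 + v) * (1 + v) ^ α :=
      Real.rpow_one_add' (by linarith) h1α
    have h1r : 1 - r = 1 + v := by rw [hv]; ring
    rw [h1r, habs, hsplit]
    have hr2 : r ^ 2 = v ^ 2 := by rw [hv]; ring
    have hrv : r = -v := by rw [hv]; ring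
    rw [hr2, hrv]
    nlinarith [mul_le_mul_of_nonneg_left hB (mul_nonneg hα hv0.le)]

lemma aux_poly_le_exp {β δ : ℝ} (hβ : 0 ≤ β) (hδ : 0 < δ) :
    ∃ C : ℝ, 0 < C ∧ ∀ x : ℝ, 0 ≤ x → (1 + x) ^ β ≤ C * Real.exp (δ * x) := by
  set d := min 1 (δ / (β + 1)) with hd
  have hd0 : 0 < d := lt_min one_pos (by positivity)
  have hd1 : d ≤ 1 := min_le_left _ _
  refine ⟨(1 / d) ^ β, Real.rpow_pos_of_pos (by positivity) _, fun x hx => ?_⟩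
  have h1 : 1 + x ≤ (1 / d) * Real.exp (d * x) := by
    have he : 1 + d * x ≤ Real.exp (d * x) := by
      have := Real.add_one_le_exp (d * x); linarith
    have : d * (1 + x) ≤ 1 + d * x := by nlinarith
    rw [div_mul_eq_mul_div, le_div_iff₀ hd0, mul_comm]
    nlinarith
  have h2 : (1 + x) ^ β ≤ ((1 / d) * Real.exp (d * x)) ^ β :=
    Real.rpow_le_rpow (by linarith) h1 hβ
  have h3 : ((1 / d) * Real.exp (d * x)) ^ β = (1 / d) ^ β * Real.exp (d * x * β) := by
    rw [Real.mul_rpow (by positivity) (Real.exp_pos _).le, aux_exp_rpow]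
  have h4 : Real.exp (d * x * β) ≤ Real.exp (δ * x) := by
    apply Real.exp_le_exp.mpr
    have hdb : d * β ≤ δ := by
      have : d ≤ δ / (β + 1) := min_le_right _ _
      calc d * β ≤ (δ / (β + 1)) * β := by nlinarith
        _ ≤ δ := by rw [div_mul_eq_mul_div, div_le_iff₀ (by positivity)]; nlinarith
    calc d * x * β = (d * β) * x := by ring
      _ ≤ δ * x := by nlinarith
  calc (1 + x) ^ β ≤ (1 / d) ^ β * Real.exp (d * x * β) := h2.trans_eq h3
    _ ≤ (1 / d) ^ β * Real.exp (δ * x) := by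
        apply mul_le_mul_of_nonneg_left h4 (Real.rpow_nonneg (by positivity) _)

lemma aux_poly_abs_le_exp {β δ : ℝ} (hβ : 0 ≤ β) (hδ : 0 < δ) :
    ∃ C : ℝ, 0 < C ∧ ∀ x : ℝ,
      (1 + |x|) ^ β ≤ C * (Real.exp (δ * x) + Real.exp (-δ * x)) := by
  obtain ⟨C, hC, h⟩ := aux_poly_le_exp hβ hδ
  refine ⟨C, hC, fun x => ?_⟩
  have h1 : (1 + |x|) ^ β ≤ C * Real.exp (δ * |x|) := h |x| (abs_nonneg x)
  have h2 : Real.exp (δ * |x|) ≤ Real.exp (δ * x) + Real.exp (-δ * x) := by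
    rcases abs_cases x with ⟨he, _⟩ | ⟨he, _⟩
    · rw [he]; have := (Real.exp_pos (-δ * x)).le; linarith
    · rw [he]; have := (Real.exp_pos (δ * x)).le
      have : Real.exp (δ * -x) = Real.exp (-δ * x) := by ring_nf
      rw [this]; have := (Real.exp_pos (δ * x)).le; linarith
  calc (1 + |x|) ^ β ≤ C * Real.exp (δ * |x|) := h1
    _ ≤ C * (Real.exp (δ * x) + Real.exp (-δ * x)) := by
        apply mul_le_mul_of_nonneg_left h2 hC.le

/-- Scaled second-order bound. -/
lemma aux_ps {α s x : ℝ} (hα : 0 ≤ α) (hs : 1 ≤ s) (hx : x ≤ s - 1) :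
    (s - x) ^ (1 + α)
      ≤ s ^ (1 + α) - (1 + α) * s ^ α * x + α * (1 + α) * s ^ (α - 1) * (1 + |x|) ^ (2 + α) := by
  have hs0 : (0 : ℝ) < s := by linarith
  set r := x / s with hrdef
  have hr1 : r ≤ 1 := by
    rw [hrdef, div_le_one hs0]; linarith
  have hsx : s - x = s * (1 - r) := by
    rw [hrdef]; field_simp
  have h1r : (0:ℝ) ≤ 1 - r := by
    rw [hrdef, sub_nonneg, div_le_one hs0]; linarith
  have hsplit : (s - x) ^ (1 + α) = s ^ (1 + α) * (1 - r) ^ (1 + α) := by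
    rw [hsx, Real.mul_rpow hs0.le h1r]
  have hkey := aux_key_pointwise hα hr1
  have hmul : s ^ (1 + α) * (1 - r) ^ (1 + α)
      ≤ s ^ (1 + α) * (1 - (1 + α) * r + α * (1 + α) * r ^ 2 * (1 + |r|) ^ α) :=
    mul_le_mul_of_nonneg_left hkey (Real.rpow_nonneg hs0.le _)
  -- identities
  have hs_a1 : s ^ (1 + α) = s ^ α * s := by
    rw [add_comm, Real.rpow_add_one hs0.ne' α]
  have hs_am1 : s ^ (1 + α) = s ^ (α - 1) * s ^ 2 := by
    rw [← Real.rpow_natCast s 2, ← Real.rpow_add hs0]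
    congr 1; push_cast; ring
  have hid1 : s ^ (1 + α) * ((1 + α) * r) = (1 + α) * s ^ α * x := by
    rw [hs_a1, hrdef]; field_simp
  have habs : |r| ≤ |x| := by
    rw [hrdef, abs_div, abs_of_pos hs0]
    exact div_le_self (abs_nonneg x) hs
  have hrpow : (1 + |r|) ^ α ≤ (1 + |x|) ^ α :=
    Real.rpow_le_rpow (by positivity) (by linarith) hα
  have hx2 : x ^ 2 * (1 + |x|) ^ α ≤ (1 + |x|) ^ (2 + α) := by
    have h1 : x ^ 2 ≤ (1 + |x|) ^ 2 := by
      nlinarith [abs_nonneg x, sq_abs x]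
    have h2 : (1 + |x|) ^ (2 + α) = (1 + |x|) ^ 2 * (1 + |x|) ^ α := by
      rw [← Real.rpow_natCast (1 + |x|) 2, ← Real.rpow_add (by positivity)]
      norm_num
    rw [h2]
    exact mul_le_mul_of_nonneg_right h1 (Real.rpow_nonneg (by positivity) _)
  have hid2 : s ^ (1 + α) * (r ^ 2 * (1 + |r|) ^ α)
      ≤ s ^ (α - 1) * (1 + |x|) ^ (2 + α) := by
    have hr2 : s ^ (1 + α) * r ^ 2 = s ^ (α - 1) * x ^ 2 := by
      rw [hs_am1, hrdef]; field_simp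
    have hrpnn : (0:ℝ) ≤ r ^ 2 := sq_nonneg r
    calc s ^ (1 + α) * (r ^ 2 * (1 + |r|) ^ α)
        ≤ s ^ (1 + α) * (r ^ 2 * (1 + |x|) ^ α) := by
          apply mul_le_mul_of_nonneg_left _ (Real.rpow_nonneg hs0.le _)
          exact mul_le_mul_of_nonneg_left hrpow hrpnn
      _ = s ^ (α - 1) * x ^ 2 * (1 + |x|) ^ α := by rw [← mul_assoc, hr2]
      _ = s ^ (α - 1) * (x ^ 2 * (1 + |x|) ^ α) := by ring
      _ ≤ s ^ (α - 1) * (1 + |x|) ^ (2 + α) := by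
          apply mul_le_mul_of_nonneg_left hx2 (Real.rpow_nonneg hs0.le _)
  calc (s - x) ^ (1 + α)
      = s ^ (1 + α) * (1 - (1 + α) * r + α * (1 + α) * r ^ 2 * (1 + |r|) ^ α)
        - s ^ (1 + α) * (1 - (1 + α) * r + α * (1 + α) * r ^ 2 * (1 + |r|) ^ α)
        + s ^ (1 + α) * (1 - r) ^ (1 + α) := by rw [hsplit]; ring
    _ ≤ s ^ (1 + α) * (1 - (1 + α) * r + α * (1 + α) * r ^ 2 * (1 + |r|) ^ α) := by
        nlinarith [hmul]
    _ = s ^ (1 + α) - s ^ (1 + α) * ((1 + α) * r)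
        + α * (1 + α) * (s ^ (1 + α) * (r ^ 2 * (1 + |r|) ^ α)) := by ring
    _ ≤ s ^ (1 + α) - (1 + α) * s ^ α * x
        + α * (1 + α) * (s ^ (α - 1) * (1 + |x|) ^ (2 + α)) := by
        rw [hid1]
        have := mul_le_mul_of_nonneg_left hid2 (by positivity : (0:ℝ) ≤ α * (1 + α))
        linarith
    _ = s ^ (1 + α) - (1 + α) * s ^ α * x + α * (1 + α) * s ^ (α - 1) * (1 + |x|) ^ (2 + α) := by
        ring

end AuxAnalysis

section AuxProb
variable {μ : Measure Ω} [IsProbabilityMeasure μ] {Y : Ω → ℝ} {γ η₁ η₂ : ℝ}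

lemma aux_int_poly_exp (hY : Measurable Y) (hη₁ : 0 < η₁)
    (hexp : ∀ u : ℝ, -η₁ < u → u < γ + η₂ → Integrable (fun ω => Real.exp (u * Y ω)) μ)
    {β u : ℝ} (hβ : 0 ≤ β) (hu1 : -η₁ < u) (hu2 : u < γ + η₂) :
    Integrable (fun ω => (1 + |Y ω|) ^ β * Real.exp (u * Y ω)) μ := by
  set δ := min ((u + η₁) / 2) ((γ + η₂ - u) / 2) with hδdef
  have hδ : 0 < δ := lt_min (by linarith) (by linarith)
  obtain ⟨C, hC, hCb⟩ := aux_poly_abs_le_exp hβ hδ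
  have hδ1 : δ ≤ (u + η₁) / 2 := min_le_left _ _
  have hδ2 : δ ≤ (γ + η₂ - u) / 2 := min_le_right _ _
  have hint : Integrable (fun ω => C * (Real.exp ((u + δ) * Y ω)
      + Real.exp ((u - δ) * Y ω))) μ :=
    ((hexp (u + δ) (by linarith) (by linarith)).add
      (hexp (u - δ) (by linarith) (by linarith))).const_mul C
  apply hint.mono'
  · exact (((Real.continuous_rpow_const hβ).measurable.comp
      (measurable_const.add hY.abs)).mul
      (Real.measurable_exp.comp (hY.const_mul u))).aestronglyMeasurable
  · refine Filter.Eventually.of_forall fun ω => ?_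
    have hnn : (0:ℝ) ≤ (1 + |Y ω|) ^ β * Real.exp (u * Y ω) :=
      mul_nonneg (Real.rpow_nonneg (by positivity) _) (Real.exp_pos _).le
    rw [Real.norm_eq_abs, abs_of_nonneg hnn]
    have h2 : ((1:ℝ) + |Y ω|) ^ β * Real.exp (u * Y ω)
        ≤ C * (Real.exp (δ * Y ω) + Real.exp (-δ * Y ω)) * Real.exp (u * Y ω) :=
      mul_le_mul_of_nonneg_right (hCb (Y ω)) (Real.exp_pos _).le
    refine h2.trans_eq ?_
    rw [mul_assoc, add_mul, ← Real.exp_add, ← Real.exp_add]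
    ring_nf

/-- Integrability of `|Y|^0=1`-type products: the main workhorse. -/
lemma aux_int_mul_exp (hY : Measurable Y) (hη₁ : 0 < η₁)
    (hexp : ∀ u : ℝ, -η₁ < u → u < γ + η₂ → Integrable (fun ω => Real.exp (u * Y ω)) μ)
    {u : ℝ} (hu1 : -η₁ < u) (hu2 : u < γ + η₂) :
    Integrable (fun ω => Y ω * Real.exp (u * Y ω)) μ := by
  apply (aux_int_poly_exp hY hη₁ hexp zero_le_one hu1 hu2).mono'
    ((hY.mul ((hY.const_mul u).exp)).aestronglyMeasurable)
  refine Filter.Eventually.of_forall fun ω => ?_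
  rw [Real.norm_eq_abs, Pi.mul_apply, abs_mul, abs_of_pos (Real.exp_pos _), Real.rpow_one]
  have : |Y ω| ≤ 1 + |Y ω| := by linarith [abs_nonneg (Y ω)]
  exact mul_le_mul_of_nonneg_right this (Real.exp_pos _).le

lemma aux_m_pos (hY : Measurable Y) (hγ : 0 < γ) (hη₁ : 0 < η₁) (hη₂ : 0 < η₂)
    (hdrift : ∫ ω, Y ω ∂μ < 0)
    (hγ1 : ∫ ω, Real.exp (γ * Y ω) ∂μ = 1)
    (hexp : ∀ u : ℝ, -η₁ < u → u < γ + η₂ → Integrable (fun ω => Real.exp (u * Y ω)) μ) :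
    0 < ∫ ω, Y ω * Real.exp (γ * Y ω) ∂μ := by
  have hintE : Integrable (fun ω => Real.exp (γ * Y ω)) μ :=
    hexp γ (by linarith) (by linarith)
  have hintY : Integrable (fun ω => Y ω * Real.exp (γ * Y ω)) μ :=
    aux_int_mul_exp hY hη₁ hexp (by linarith) (by linarith)
  set m := ∫ ω, Y ω * Real.exp (γ * Y ω) ∂μ with hm
  set g : Ω → ℝ := fun ω => 1 - Real.exp (γ * Y ω) + γ * (Y ω * Real.exp (γ * Y ω)) with hg
  have hgnn : ∀ ω, 0 ≤ g ω := by
    intro ω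
    have := aux_exp_mul_one_sub_le (γ * Y ω)
    simp only [hg]; nlinarith
  have hgint : Integrable g μ :=
    ((integrable_const (1:ℝ)).sub hintE).add (hintY.const_mul γ)
  have hsub : Integrable (fun ω => 1 - Real.exp (γ * Y ω)) μ :=
    (integrable_const (1:ℝ)).sub hintE
  have hcm : Integrable (fun ω => γ * (Y ω * Real.exp (γ * Y ω))) μ :=
    hintY.const_mul γ
  have hgval : ∫ ω, g ω ∂μ = γ * m := by
    rw [hg]
    rw [integral_add hsub hcm, integral_sub (integrable_const (1:ℝ)) hintE,
      integral_const_mul, hγ1]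
    simp [hm]
  rcases lt_or_ge 0 m with h | h
  · exact h
  · exfalso
    have h0 : ∫ ω, g ω ∂μ ≤ 0 := by rw [hgval]; nlinarith
    have h0' : ∫ ω, g ω ∂μ = 0 :=
      le_antisymm h0 (integral_nonneg hgnn)
    have hae : g =ᵐ[μ] 0 :=
      (integral_eq_zero_iff_of_nonneg hgnn hgint).mp h0'
    have hYae : Y =ᵐ[μ] 0 := by
      filter_upwards [hae] with ω hω
      by_contra hne
      have hx : γ * Y ω ≠ 0 := mul_ne_zero (ne_of_gt hγ) hne
      have hstrict : γ * Y ω + 1 < Real.exp (γ * Y ω) := Real.add_one_lt_exp hx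
      have hcontr : 1 - Real.exp (γ * Y ω) + γ * (Y ω * Real.exp (γ * Y ω)) = 0 := hω
      have hpos : 0 < Real.exp (γ * Y ω) := Real.exp_pos _
      -- from equality: (1 - γ Y) e^{γY} = 1, but also e^{-x} > 1 - x strict
      have h2 : Real.exp (-(γ * Y ω)) > 1 - γ * Y ω := by
        have := Real.add_one_lt_exp (neg_ne_zero.mpr hx); linarith
      have h3 : Real.exp (-(γ * Y ω)) * Real.exp (γ * Y ω) = 1 := by
        rw [← Real.exp_add]; simp
      nlinarith
    have : ∫ ω, Y ω ∂μ = 0 := by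
      rw [integral_congr_ae hYae]; simp
    linarith

set_option maxHeartbeats 1000000 in
/-- Core integral estimate: uniform negative drift for the weighted functional. -/
lemma aux_core (hY : Measurable Y) (hγ : 0 < γ) (hη₁ : 0 < η₁) (hη₂ : 0 < η₂)
    (hdrift : ∫ ω, Y ω ∂μ < 0)
    (hγ1 : ∫ ω, Real.exp (γ * Y ω) ∂μ = 1)
    (hexp : ∀ u : ℝ, -η₁ < u → u < γ + η₂ → Integrable (fun ω => Real.exp (u * Y ω)) μ)
    {α : ℝ} (hα : 0 ≤ α) :
    ∃ S₀ c₂ : ℝ, 1 ≤ S₀ ∧ 0 < c₂ ∧ ∀ s : ℝ, S₀ ≤ s →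
      ∫ ω, (if Y ω ≤ s - 1 then Real.exp (γ * Y ω) * (s - Y ω) ^ (1 + α) else 0) ∂μ
        ≤ s ^ (1 + α) - c₂ * s ^ α := by
  set m := ∫ ω, Y ω * Real.exp (γ * Y ω) ∂μ with hmdef
  have hm : 0 < m := aux_m_pos hY hγ hη₁ hη₂ hdrift hγ1 hexp
  set γ' := γ + η₂ / 2 with hγ'def
  set κ := η₂ / 2 with hκdef
  have hκ : 0 < κ := by rw [hκdef]; linarith
  have hintE : Integrable (fun ω => Real.exp (γ * Y ω)) μ := hexp γ (by linarith) (by linarith)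
  have hintY : Integrable (fun ω => Y ω * Real.exp (γ * Y ω)) μ :=
    aux_int_mul_exp hY hη₁ hexp (by linarith) (by linarith)
  have hintM2 : Integrable (fun ω => (1 + |Y ω|) ^ (2 + α) * Real.exp (γ * Y ω)) μ :=
    aux_int_poly_exp hY hη₁ hexp (by linarith) (by linarith) (by linarith)
  have hintMp : Integrable (fun ω => (1 + |Y ω|) ^ (1:ℝ) * Real.exp (γ' * Y ω)) μ :=
    aux_int_poly_exp hY hη₁ hexp zero_le_one (by rw [hγ'def]; linarith)
      (by rw [hγ'def]; linarith)
  have hint1a : Integrable (fun ω => (1 + |Y ω|) ^ (1 + α) * Real.exp (γ * Y ω)) μ :=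
    aux_int_poly_exp hY hη₁ hexp (by linarith) (by linarith) (by linarith)
  set M₂ := ∫ ω, (1 + |Y ω|) ^ (2 + α) * Real.exp (γ * Y ω) ∂μ with hM2def
  set Mp := ∫ ω, (1 + |Y ω|) ^ (1:ℝ) * Real.exp (γ' * Y ω) ∂μ with hMpdef
  have hM2nn : 0 ≤ M₂ := integral_nonneg fun ω =>
    mul_nonneg (Real.rpow_nonneg (by positivity) _) (Real.exp_pos _).le
  have hMpnn : 0 ≤ Mp := integral_nonneg fun ω =>
    mul_nonneg (Real.rpow_nonneg (by positivity) _) (Real.exp_pos _).le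
  set S₀ : ℝ := max (max 1 (4 * α * M₂ / m)) (1 + (1 / κ) * Real.log ((4 * Mp + m) / m))
    with hS₀def
  refine ⟨S₀, (1 + α) * m / 2, le_trans (le_max_left 1 _) (le_max_left _ _), by positivity,
    fun s hs => ?_⟩
  have hs1 : 1 ≤ s := le_trans (le_trans (le_max_left 1 _) (le_max_left _ _)) hs
  have hs0 : 0 < s := by linarith
  have htail_s : Mp * Real.exp (-κ * (s - 1)) ≤ m / 4 := by
    have h1 : 1 + (1 / κ) * Real.log ((4 * Mp + m) / m) ≤ s :=
      le_trans (le_max_right _ _) hs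
    have hlog : Real.log ((4 * Mp + m) / m) ≤ κ * (s - 1) := by
      calc Real.log ((4 * Mp + m) / m) = κ * ((1 / κ) * Real.log ((4 * Mp + m) / m)) := by
            field_simp
        _ ≤ κ * (s - 1) := mul_le_mul_of_nonneg_left (by linarith) hκ.le
    have hquot : (0:ℝ) < (4 * Mp + m) / m := by positivity
    have hexp_ge : (4 * Mp + m) / m ≤ Real.exp (κ * (s - 1)) := by
      calc (4 * Mp + m) / m = Real.exp (Real.log ((4 * Mp + m) / m)) :=
            (Real.exp_log hquot).symm
        _ ≤ Real.exp (κ * (s - 1)) := Real.exp_le_exp.mpr hlog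
    have hepos : 0 < Real.exp (κ * (s - 1)) := Real.exp_pos _
    have h4 : 4 * Mp ≤ m * Real.exp (κ * (s - 1)) := by
      have h5 : 4 * Mp + m ≤ m * Real.exp (κ * (s - 1)) := by
        have h6 := mul_le_mul_of_nonneg_left hexp_ge hm.le
        calc 4 * Mp + m = m * ((4 * Mp + m) / m) := by field_simp
          _ ≤ m * Real.exp (κ * (s - 1)) := h6
      linarith
    have hneg : Real.exp (-κ * (s - 1)) = (Real.exp (κ * (s - 1)))⁻¹ := by
      rw [show -κ * (s - 1) = -(κ * (s - 1)) by ring, Real.exp_neg]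
    have hii : (0:ℝ) < (Real.exp (κ * (s - 1)))⁻¹ := by positivity
    have hee : Real.exp (κ * (s - 1)) * (Real.exp (κ * (s - 1)))⁻¹ = 1 :=
      mul_inv_cancel₀ hepos.ne'
    rw [hneg]
    nlinarith [mul_le_mul_of_nonneg_right h4 hii.le]
  have hsM2 : α * M₂ ≤ (m / 4) * s := by
    have h1 : 4 * α * M₂ / m ≤ s := le_trans (le_trans (le_max_right _ _) (le_max_left _ _)) hs
    have := mul_le_mul_of_nonneg_left h1 hm.le
    calc α * M₂ = (m * (4 * α * M₂ / m)) / 4 := by field_simp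
      _ ≤ (m / 4) * s := by nlinarith
  -- now the integral estimation
  set E : Set Ω := {ω | Y ω ≤ s - 1} with hEdef
  have hE : MeasurableSet E := hY measurableSet_Iic
  have hmemE : ∀ ω, ω ∈ E ↔ Y ω ≤ s - 1 := fun ω => Iff.rfl
  set g : Ω → ℝ := fun ω => Real.exp (γ * Y ω) * (s - Y ω) ^ (1 + α) with hgdef
  have hgm : Measurable g :=
    ((hY.const_mul γ).exp).mul
      ((Real.continuous_rpow_const (by linarith : (0:ℝ) ≤ 1 + α)).measurable.comp
        (measurable_const.sub hY))
  have hif : (fun ω => if Y ω ≤ s - 1 then Real.exp (γ * Y ω) * (s - Y ω) ^ (1 + α) else 0)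
      = E.indicator g := by
    ext ω; rw [Set.indicator_apply]
    by_cases h : Y ω ≤ s - 1
    · rw [if_pos h, if_pos ((hmemE ω).mpr h), hgdef]
    · rw [if_neg h, if_neg (fun hc => h ((hmemE ω).mp hc))]
  have hgnnE : ∀ ω ∈ E, 0 ≤ g ω := fun ω hω =>
    mul_nonneg (Real.exp_pos _).le (Real.rpow_nonneg (by
      have : Y ω ≤ s - 1 := hω; linarith) _)
  -- integrable on E
  have hgOn : IntegrableOn g E μ := by
    apply Integrable.mono'
      (((hint1a.const_mul (s ^ (1 + α)))).integrableOn :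
        IntegrableOn (fun ω => s ^ (1 + α) * ((1 + |Y ω|) ^ (1 + α) * Real.exp (γ * Y ω))) E μ)
      hgm.aestronglyMeasurable.restrict
    filter_upwards [ae_restrict_mem hE] with ω hω
    have hYω : Y ω ≤ s - 1 := hω
    have h0 : (0:ℝ) ≤ s - Y ω := by linarith
    rw [Real.norm_eq_abs, abs_of_nonneg (hgnnE ω hω), hgdef]
    have hb : (s - Y ω) ^ (1 + α) ≤ s ^ (1 + α) * (1 + |Y ω|) ^ (1 + α) := by
      rw [← Real.mul_rpow hs0.le (by positivity)]
      apply Real.rpow_le_rpow h0 _ (by linarith)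
      nlinarith [neg_abs_le (Y ω), abs_nonneg (Y ω),
        mul_le_mul_of_nonneg_right hs1 (abs_nonneg (Y ω))]
    calc Real.exp (γ * Y ω) * (s - Y ω) ^ (1 + α)
        ≤ Real.exp (γ * Y ω) * (s ^ (1 + α) * (1 + |Y ω|) ^ (1 + α)) :=
          mul_le_mul_of_nonneg_left hb (Real.exp_pos _).le
      _ = s ^ (1 + α) * ((1 + |Y ω|) ^ (1 + α) * Real.exp (γ * Y ω)) := by ring
  set φ : Ω → ℝ := fun ω => s ^ (1 + α) * Real.exp (γ * Y ω)
      - (1 + α) * s ^ α * (Y ω * Real.exp (γ * Y ω))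
      + α * (1 + α) * s ^ (α - 1) * ((1 + |Y ω|) ^ (2 + α) * Real.exp (γ * Y ω)) with hφdef
  have hφint : Integrable φ μ :=
    ((hintE.const_mul (s ^ (1 + α))).sub
      (hintY.const_mul ((1 + α) * s ^ α))).add
      (hintM2.const_mul (α * (1 + α) * s ^ (α - 1)))
  have hmono : ∫ ω in E, g ω ∂μ ≤ ∫ ω in E, φ ω ∂μ := by
    apply setIntegral_mono_on hgOn hφint.integrableOn hE
    intro ω hω
    have hYω : Y ω ≤ s - 1 := hω
    have hps := aux_ps hα hs1 hYω
    calc g ω = Real.exp (γ * Y ω) * (s - Y ω) ^ (1 + α) := rfl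
      _ ≤ Real.exp (γ * Y ω) * (s ^ (1 + α) - (1 + α) * s ^ α * Y ω
            + α * (1 + α) * s ^ (α - 1) * (1 + |Y ω|) ^ (2 + α)) :=
          mul_le_mul_of_nonneg_left hps (Real.exp_pos _).le
      _ = φ ω := by rw [hφdef]; ring
  have hsplit : ∫ ω in E, φ ω ∂μ
      = s ^ (1 + α) * ∫ ω in E, Real.exp (γ * Y ω) ∂μ
        - (1 + α) * s ^ α * ∫ ω in E, Y ω * Real.exp (γ * Y ω) ∂μ
        + α * (1 + α) * s ^ (α - 1)
          * ∫ ω in E, (1 + |Y ω|) ^ (2 + α) * Real.exp (γ * Y ω) ∂μ := by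
    have i1 : Integrable (fun ω => s ^ (1 + α) * Real.exp (γ * Y ω)
        - (1 + α) * s ^ α * (Y ω * Real.exp (γ * Y ω))) (μ.restrict E) :=
      ((hintE.const_mul (s ^ (1 + α))).sub (hintY.const_mul ((1 + α) * s ^ α))).integrableOn
    have i2 : Integrable (fun ω => α * (1 + α) * s ^ (α - 1)
        * ((1 + |Y ω|) ^ (2 + α) * Real.exp (γ * Y ω))) (μ.restrict E) :=
      (hintM2.const_mul (α * (1 + α) * s ^ (α - 1))).integrableOn
    have i3 : Integrable (fun ω => s ^ (1 + α) * Real.exp (γ * Y ω)) (μ.restrict E) :=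
      (hintE.const_mul (s ^ (1 + α))).integrableOn
    have i4 : Integrable (fun ω => (1 + α) * s ^ α * (Y ω * Real.exp (γ * Y ω)))
        (μ.restrict E) :=
      (hintY.const_mul ((1 + α) * s ^ α)).integrableOn
    rw [hφdef]
    rw [integral_add i1 i2, integral_sub i3 i4,
      integral_const_mul, integral_const_mul, integral_const_mul]
  -- bounds on the three set integrals
  have hA : ∫ ω in E, Real.exp (γ * Y ω) ∂μ ≤ 1 := by
    rw [← hγ1]
    exact setIntegral_le_integral hintE
      (Filter.Eventually.of_forall fun ω => (Real.exp_pos _).le)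
  have hC : ∫ ω in E, (1 + |Y ω|) ^ (2 + α) * Real.exp (γ * Y ω) ∂μ ≤ M₂ := by
    rw [hM2def]
    exact setIntegral_le_integral hintM2
      (Filter.Eventually.of_forall fun ω =>
        mul_nonneg (Real.rpow_nonneg (by positivity) _) (Real.exp_pos _).le)
  have hB : m - Mp * Real.exp (-κ * (s - 1))
      ≤ ∫ ω in E, Y ω * Real.exp (γ * Y ω) ∂μ := by
    have hcompl : ∫ ω in E, Y ω * Real.exp (γ * Y ω) ∂μ
        + ∫ ω in Eᶜ, Y ω * Real.exp (γ * Y ω) ∂μ = m := by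
      rw [hmdef]; exact integral_add_compl hE hintY
    have htailb : ∫ ω in Eᶜ, Y ω * Real.exp (γ * Y ω) ∂μ
        ≤ Mp * Real.exp (-κ * (s - 1)) := by
      have hstep : ∫ ω in Eᶜ, Y ω * Real.exp (γ * Y ω) ∂μ
          ≤ ∫ ω in Eᶜ, Real.exp (-κ * (s - 1))
              * ((1 + |Y ω|) ^ (1:ℝ) * Real.exp (γ' * Y ω)) ∂μ := by
        apply setIntegral_mono_on hintY.integrableOn
          ((hintMp.const_mul (Real.exp (-κ * (s - 1)))).integrableOn) hE.compl
        intro ω hω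
        have hYω : s - 1 < Y ω := by
          by_contra hc; exact hω ((hmemE ω).mpr (not_lt.mp hc))
        have hY0 : 0 ≤ Y ω := by linarith
        have he1 : Real.exp (γ * Y ω)
            = Real.exp (γ' * Y ω) * Real.exp (-κ * Y ω) := by
          rw [← Real.exp_add]; congr 1; rw [hγ'def]; ring
        have he2 : Real.exp (-κ * Y ω) ≤ Real.exp (-κ * (s - 1)) := by
          apply Real.exp_le_exp.mpr; nlinarith
        have hYabs : Y ω ≤ (1 + |Y ω|) ^ (1:ℝ) := by
          rw [Real.rpow_one]; have := le_abs_self (Y ω); linarith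
        calc Y ω * Real.exp (γ * Y ω)
            = Y ω * Real.exp (γ' * Y ω) * Real.exp (-κ * Y ω) := by rw [he1]; ring
          _ ≤ Y ω * Real.exp (γ' * Y ω) * Real.exp (-κ * (s - 1)) := by
              apply mul_le_mul_of_nonneg_left he2
                (mul_nonneg hY0 (Real.exp_pos _).le)
          _ ≤ (1 + |Y ω|) ^ (1:ℝ) * Real.exp (γ' * Y ω) * Real.exp (-κ * (s - 1)) := by
              apply mul_le_mul_of_nonneg_right _ (Real.exp_pos _).le
              exact mul_le_mul_of_nonneg_right hYabs (Real.exp_pos _).le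
          _ = Real.exp (-κ * (s - 1)) * ((1 + |Y ω|) ^ (1:ℝ) * Real.exp (γ' * Y ω)) := by
              ring
      have hstep2 : ∫ ω in Eᶜ, Real.exp (-κ * (s - 1))
          * ((1 + |Y ω|) ^ (1:ℝ) * Real.exp (γ' * Y ω)) ∂μ
          ≤ Real.exp (-κ * (s - 1)) * Mp := by
        rw [integral_const_mul]
        apply mul_le_mul_of_nonneg_left _ (Real.exp_pos _).le
        rw [hMpdef]
        exact setIntegral_le_integral hintMp
          (Filter.Eventually.of_forall fun ω =>
            mul_nonneg (Real.rpow_nonneg (by positivity) _) (Real.exp_pos _).le)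
      calc ∫ ω in Eᶜ, Y ω * Real.exp (γ * Y ω) ∂μ
          ≤ Real.exp (-κ * (s - 1)) * Mp := hstep.trans hstep2
        _ = Mp * Real.exp (-κ * (s - 1)) := by ring
    linarith
  -- final numeric assembly
  rw [hif, integral_indicator hE]
  have hspow : (0:ℝ) < s ^ α := Real.rpow_pos_of_pos hs0 _
  have hspow1 : (0:ℝ) < s ^ (1 + α) := Real.rpow_pos_of_pos hs0 _
  have hspowm1 : (0:ℝ) ≤ s ^ (α - 1) := (Real.rpow_pos_of_pos hs0 _).le
  have hsid : s ^ (α - 1) * s = s ^ α := by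
    rw [← Real.rpow_add_one hs0.ne' (α - 1)]; ring_nf
  have hB' : (3 / 4) * m ≤ ∫ ω in E, Y ω * Real.exp (γ * Y ω) ∂μ := by
    have := htail_s; linarith
  have hT1 : s ^ (1 + α) * ∫ ω in E, Real.exp (γ * Y ω) ∂μ ≤ s ^ (1 + α) := by
    calc s ^ (1 + α) * ∫ ω in E, Real.exp (γ * Y ω) ∂μ ≤ s ^ (1 + α) * 1 :=
          mul_le_mul_of_nonneg_left hA hspow1.le
      _ = s ^ (1 + α) := mul_one _
  have hT2 : - ((1 + α) * s ^ α * ∫ ω in E, Y ω * Real.exp (γ * Y ω) ∂μ)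
      ≤ - ((1 + α) * s ^ α * ((3 / 4) * m)) := by
    apply neg_le_neg
    apply mul_le_mul_of_nonneg_left hB' (by positivity)
  have hT3 : α * (1 + α) * s ^ (α - 1)
      * ∫ ω in E, (1 + |Y ω|) ^ (2 + α) * Real.exp (γ * Y ω) ∂μ
      ≤ (1 + α) * (m / 4) * s ^ α := by
    have h1 : α * (1 + α) * s ^ (α - 1)
        * ∫ ω in E, (1 + |Y ω|) ^ (2 + α) * Real.exp (γ * Y ω) ∂μ
        ≤ α * (1 + α) * s ^ (α - 1) * M₂ := by
      apply mul_le_mul_of_nonneg_left hC (by positivity)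
    have h2 : α * (1 + α) * s ^ (α - 1) * M₂ ≤ (1 + α) * (m / 4) * s ^ α := by
      have h3 : (1 + α) * s ^ (α - 1) * (α * M₂) ≤ (1 + α) * s ^ (α - 1) * ((m / 4) * s) :=
        mul_le_mul_of_nonneg_left hsM2 (by positivity)
      calc α * (1 + α) * s ^ (α - 1) * M₂ = (1 + α) * s ^ (α - 1) * (α * M₂) := by ring
        _ ≤ (1 + α) * s ^ (α - 1) * ((m / 4) * s) := h3
        _ = (1 + α) * (m / 4) * (s ^ (α - 1) * s) := by ring
        _ = (1 + α) * (m / 4) * s ^ α := by rw [hsid]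
    linarith
  calc ∫ ω in E, g ω ∂μ ≤ ∫ ω in E, φ ω ∂μ := hmono
    _ = s ^ (1 + α) * ∫ ω in E, Real.exp (γ * Y ω) ∂μ
        - (1 + α) * s ^ α * ∫ ω in E, Y ω * Real.exp (γ * Y ω) ∂μ
        + α * (1 + α) * s ^ (α - 1)
          * ∫ ω in E, (1 + |Y ω|) ^ (2 + α) * Real.exp (γ * Y ω) ∂μ := hsplit
    _ ≤ s ^ (1 + α) - (1 + α) * s ^ α * ((3 / 4) * m) + (1 + α) * (m / 4) * s ^ α := by
        linarith
    _ ≤ s ^ (1 + α) - (1 + α) * m / 2 * s ^ α := le_of_eq (by ring)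

set_option maxHeartbeats 1000000 in
/-- The one-step ENNReal drift inequality for the Lyapunov weight. -/
lemma aux_drift (hY : Measurable Y) (hγ : 0 < γ) (hη₁ : 0 < η₁) (hη₂ : 0 < η₂)
    (hdrift : ∫ ω, Y ω ∂μ < 0)
    (hγ1 : ∫ ω, Real.exp (γ * Y ω) ∂μ = 1)
    (hexp : ∀ u : ℝ, -η₁ < u → u < γ + η₂ → Integrable (fun ω => Real.exp (u * Y ω)) μ)
    {α : ℝ} (hα : 0 ≤ α) :
    ∃ K R : ℝ, 1 ≤ K ∧ 0 ≤ R ∧ ∀ t : ℝ, 1 ≤ t →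
      ENNReal.ofReal (t ^ α) + ∫⁻ ω, ENNReal.ofReal (Real.exp (γ * Y ω)) *
          (if 1 ≤ t - Y ω then ENNReal.ofReal (K * (t - Y ω + R) ^ (1 + α))
            else ENNReal.ofReal ((2 - (t - Y ω)) ^ α)) ∂μ
        ≤ ENNReal.ofReal (K * (t + R) ^ (1 + α)) := by
  obtain ⟨S₀, c₂, hS₀, hc₂, hcore⟩ := aux_core hY hγ hη₁ hη₂ hdrift hγ1 hexp hα
  have hCint : Integrable (fun ω => (1 + |Y ω|) ^ α * Real.exp (γ * Y ω)) μ :=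
    aux_int_poly_exp hY hη₁ hexp hα (by linarith) (by linarith)
  have hint1a : Integrable (fun ω => (1 + |Y ω|) ^ (1 + α) * Real.exp (γ * Y ω)) μ :=
    aux_int_poly_exp hY hη₁ hexp (by linarith) (by linarith) (by linarith)
  set C₁ := ∫ ω, (1 + |Y ω|) ^ α * Real.exp (γ * Y ω) ∂μ with hC₁def
  have hC₁nn : 0 ≤ C₁ := integral_nonneg fun ω =>
    mul_nonneg (Real.rpow_nonneg (by positivity) _) (Real.exp_pos _).le
  refine ⟨(1 + C₁) / c₂ + 1, S₀ - 1, ?_, by linarith, fun t ht => ?_⟩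
  · have : 0 < (1 + C₁) / c₂ := by positivity
    linarith
  set K := (1 + C₁) / c₂ + 1 with hKdef
  have hK1 : 1 ≤ K := by
    have : 0 < (1 + C₁) / c₂ := by positivity
    rw [hKdef]; linarith
  have hKc₂ : 1 + C₁ ≤ K * c₂ := by
    rw [hKdef, add_mul, div_mul_cancel₀ _ hc₂.ne', one_mul]
    linarith
  set R := S₀ - 1 with hRdef
  have hR0 : 0 ≤ R := by rw [hRdef]; linarith
  set s := t + R with hsdef
  have hsS₀ : S₀ ≤ s := by rw [hsdef, hRdef]; linarith
  have hs1 : 1 ≤ s := le_trans hS₀ hsS₀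
  have hs0 : (0:ℝ) < s := by linarith
  -- real truncated functions
  set q : Ω → ℝ := fun ω => if Y ω ≤ s - 1 then Real.exp (γ * Y ω) * (s - Y ω) ^ (1 + α) else 0
    with hqdef
  set q' : Ω → ℝ := fun ω => if Y ω ≤ t - 1 then Real.exp (γ * Y ω) * (s - Y ω) ^ (1 + α) else 0
    with hq'def
  set g₂ : Ω → ℝ := fun ω =>
      if Y ω ≤ t - 1 then 0 else Real.exp (γ * Y ω) * (2 - (t - Y ω)) ^ α with hg₂def
  have hrpm : Measurable (fun ω => Real.exp (γ * Y ω) * (s - Y ω) ^ (1 + α)) :=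
    ((hY.const_mul γ).exp).mul
      ((Real.continuous_rpow_const (by linarith : (0:ℝ) ≤ 1 + α)).measurable.comp
        (measurable_const.sub hY))
  have hqm : Measurable q := Measurable.ite (hY measurableSet_Iic) hrpm measurable_const
  have hq'm : Measurable q' := Measurable.ite (hY measurableSet_Iic) hrpm measurable_const
  have hg₂m : Measurable g₂ := by
    apply Measurable.ite (hY measurableSet_Iic) measurable_const
    exact ((hY.const_mul γ).exp).mul
      ((Real.continuous_rpow_const hα).measurable.comp
        (measurable_const.sub (measurable_const.sub hY)))
  -- integrability of q, q'
  have hdom : ∀ (h : Ω → ℝ), (∀ ω, h ω = 0 ∨ (Y ω ≤ s - 1 ∧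
      h ω = Real.exp (γ * Y ω) * (s - Y ω) ^ (1 + α))) → Measurable h → Integrable h μ := by
    intro h hcase hm
    apply (hint1a.const_mul (s ^ (1 + α))).mono' hm.aestronglyMeasurable
    refine Filter.Eventually.of_forall fun ω => ?_
    rcases hcase ω with h0 | ⟨hYω, hval⟩
    · rw [h0, norm_zero]
      positivity
    · have h0 : (0:ℝ) ≤ s - Y ω := by linarith
      rw [hval, Real.norm_eq_abs, abs_of_nonneg
        (mul_nonneg (Real.exp_pos _).le (Real.rpow_nonneg h0 _))]
      have hb : (s - Y ω) ^ (1 + α) ≤ s ^ (1 + α) * (1 + |Y ω|) ^ (1 + α) := by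
        rw [← Real.mul_rpow hs0.le (by positivity)]
        apply Real.rpow_le_rpow h0 _ (by linarith)
        nlinarith [neg_abs_le (Y ω), abs_nonneg (Y ω),
          mul_le_mul_of_nonneg_right hs1 (abs_nonneg (Y ω))]
      calc Real.exp (γ * Y ω) * (s - Y ω) ^ (1 + α)
          ≤ Real.exp (γ * Y ω) * (s ^ (1 + α) * (1 + |Y ω|) ^ (1 + α)) :=
            mul_le_mul_of_nonneg_left hb (Real.exp_pos _).le
        _ = s ^ (1 + α) * ((1 + |Y ω|) ^ (1 + α) * Real.exp (γ * Y ω)) := by ring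
  have hqint : Integrable q μ := by
    apply hdom q _ hqm
    intro ω
    by_cases h : Y ω ≤ s - 1
    · exact Or.inr ⟨h, by simp only [hqdef, if_pos h]⟩
    · exact Or.inl (by simp only [hqdef, if_neg h])
  have hq'int : Integrable q' μ := by
    apply hdom q' _ hq'm
    intro ω
    by_cases h : Y ω ≤ t - 1
    · exact Or.inr ⟨by rw [hsdef]; linarith, by simp only [hq'def, if_pos h]⟩
    · exact Or.inl (by simp only [hq'def, if_neg h])
  -- integrability and bound for g₂
  have hg₂nn : ∀ ω, 0 ≤ g₂ ω := by
    intro ω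
    by_cases h : Y ω ≤ t - 1
    · simp only [hg₂def, if_pos h]; exact le_refl 0
    · simp only [hg₂def, if_neg h]
      have : t - 1 < Y ω := not_le.mp h
      have hb : (0:ℝ) ≤ 2 - (t - Y ω) := by linarith
      positivity
  have hg₂le : ∀ ω, g₂ ω ≤ (1 + |Y ω|) ^ α * Real.exp (γ * Y ω) := by
    intro ω
    by_cases h : Y ω ≤ t - 1
    · simp only [hg₂def, if_pos h]; positivity
    · simp only [hg₂def, if_neg h]
      have h1 : t - 1 < Y ω := not_le.mp h
      have h2 : (0:ℝ) ≤ 2 - (t - Y ω) := by linarith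
      have h3 : 2 - (t - Y ω) ≤ 1 + |Y ω| := by
        have := le_abs_self (Y ω); linarith
      have := Real.rpow_le_rpow h2 h3 hα
      calc Real.exp (γ * Y ω) * (2 - (t - Y ω)) ^ α
          ≤ Real.exp (γ * Y ω) * (1 + |Y ω|) ^ α :=
            mul_le_mul_of_nonneg_left this (Real.exp_pos _).le
        _ = (1 + |Y ω|) ^ α * Real.exp (γ * Y ω) := by ring
  have hg₂int : Integrable g₂ μ := by
    apply hCint.mono' hg₂m.aestronglyMeasurable
    refine Filter.Eventually.of_forall fun ω => ?_
    rw [Real.norm_eq_abs, abs_of_nonneg (hg₂nn ω)]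
    exact hg₂le ω
  -- pointwise ENNReal splitting
  have hsplit : ∀ ω, ENNReal.ofReal (Real.exp (γ * Y ω)) *
      (if 1 ≤ t - Y ω then ENNReal.ofReal (K * (t - Y ω + R) ^ (1 + α))
        else ENNReal.ofReal ((2 - (t - Y ω)) ^ α))
      = ENNReal.ofReal (K * q' ω) + ENNReal.ofReal (g₂ ω) := by
    intro ω
    have hiff : (1 ≤ t - Y ω) ↔ (Y ω ≤ t - 1) := by constructor <;> intro <;> linarith
    by_cases h : Y ω ≤ t - 1
    · rw [if_pos (hiff.mpr h)]
      simp only [hq'def, if_pos h, hg₂def]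
      rw [ENNReal.ofReal_zero, add_zero, ← ENNReal.ofReal_mul (Real.exp_pos _).le]
      rw [show t - Y ω + R = s - Y ω by rw [hsdef]; ring]
      congr 1; ring
    · rw [if_neg (fun hc => h (hiff.mp hc))]
      simp only [hq'def, if_neg h, hg₂def]
      rw [mul_zero, ENNReal.ofReal_zero, zero_add,
        ← ENNReal.ofReal_mul (Real.exp_pos _).le]
  -- compute the lintegral
  have hlin : ∫⁻ ω, ENNReal.ofReal (Real.exp (γ * Y ω)) *
      (if 1 ≤ t - Y ω then ENNReal.ofReal (K * (t - Y ω + R) ^ (1 + α))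
        else ENNReal.ofReal ((2 - (t - Y ω)) ^ α)) ∂μ
      = ENNReal.ofReal (∫ ω, K * q' ω ∂μ) + ENNReal.ofReal (∫ ω, g₂ ω ∂μ) := by
    rw [lintegral_congr hsplit, lintegral_add_left]
    · congr 1
      · rw [ofReal_integral_eq_lintegral_ofReal (hq'int.const_mul K)
          (Filter.Eventually.of_forall fun ω => ?_)]
        have : 0 ≤ q' ω := by
          by_cases h : Y ω ≤ t - 1
          · simp only [hq'def, if_pos h]
            have h0 : (0:ℝ) ≤ s - Y ω := by rw [hsdef]; linarith
            positivity
          · simp only [hq'def, if_neg h]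
            exact le_refl 0
        positivity
      · rw [ofReal_integral_eq_lintegral_ofReal hg₂int
          (Filter.Eventually.of_forall hg₂nn)]
    · exact ENNReal.measurable_ofReal.comp (hq'm.const_mul K)
  rw [hlin]
  -- real estimates
  have hq'q : ∫ ω, q' ω ∂μ ≤ ∫ ω, q ω ∂μ := by
    apply integral_mono hq'int hqint
    intro ω
    by_cases h : Y ω ≤ t - 1
    · have h2 : Y ω ≤ s - 1 := by rw [hsdef]; linarith
      simp only [hq'def, hqdef, if_pos h, if_pos h2]
      exact le_refl _
    · simp only [hq'def, hqdef, if_neg h]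
      by_cases h2 : Y ω ≤ s - 1
      · rw [if_pos h2]
        have h0 : (0:ℝ) ≤ s - Y ω := by linarith
        positivity
      · rw [if_neg h2]
  have hqbound : ∫ ω, q ω ∂μ ≤ s ^ (1 + α) - c₂ * s ^ α := hcore s hsS₀
  have hg₂bound : ∫ ω, g₂ ω ∂μ ≤ C₁ := by
    rw [hC₁def]
    exact integral_mono hg₂int hCint hg₂le
  have hq'nn : 0 ≤ ∫ ω, q' ω ∂μ := by
    apply integral_nonneg
    intro ω
    simp only [Pi.zero_apply, hq'def]
    by_cases h : Y ω ≤ t - 1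
    · rw [if_pos h]
      have h0 : (0:ℝ) ≤ s - Y ω := by rw [hsdef]; linarith
      positivity
    · rw [if_neg h]
  have hg₂nn' : 0 ≤ ∫ ω, g₂ ω ∂μ := integral_nonneg hg₂nn
  have htα : (0:ℝ) ≤ t ^ α := Real.rpow_nonneg (by linarith) _
  rw [integral_const_mul]
  have hKq'nn : 0 ≤ K * ∫ ω, q' ω ∂μ := by positivity
  rw [← ENNReal.ofReal_add hKq'nn hg₂nn', ← ENNReal.ofReal_add htα (by positivity)]
  apply ENNReal.ofReal_le_ofReal
  -- final real inequality
  have hts : t ^ α ≤ s ^ α := Real.rpow_le_rpow (by linarith) (by rw [hsdef]; linarith) hα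
  have hsα1 : (1:ℝ) ≤ s ^ α := Real.one_le_rpow hs1 hα
  have hsαnn : (0:ℝ) ≤ s ^ α := by linarith
  have hKq : K * ∫ ω, q' ω ∂μ ≤ K * (s ^ (1 + α) - c₂ * s ^ α) := by
    apply mul_le_mul_of_nonneg_left (le_trans hq'q hqbound) (by linarith)
  have hfin : t ^ α + (1 + C₁) * s ^ α ≤ t ^ α + K * c₂ * s ^ α := by
    nlinarith
  nlinarith [mul_le_mul_of_nonneg_right hKc₂ hsαnn]
end AuxProb

lemma aux_indep_step (μ : Measure Ω) [IsProbabilityMeasure μ]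
    (X : ℕ → Ω → ℝ) (hmeas : ∀ i, Measurable (X i))
    (hindep : iIndepFun X μ) (n : ℕ)
    (F : ((Fin n → ℝ) × ℝ) → ENNReal) (hF : Measurable F) :
    ∫⁻ ω, F (fun i : Fin n => X i ω, X n ω) ∂μ
      = ∫⁻ ω, ∫⁻ ω', F (fun i : Fin n => X i ω, X n ω') ∂μ ∂μ := by
  set Pn : Ω → (Fin n → ℝ) := fun ω i => X i ω with hPndef
  have hPn : Measurable Pn := measurable_pi_lambda _ fun i => hmeas i
  have hXn : Measurable (X n) := hmeas n
  have hdisj : Disjoint (Finset.range n) ({n} : Finset ℕ) := by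
    simp [Finset.disjoint_singleton_right]
  have hfin := hindep.indepFun_finset (Finset.range n) {n} hdisj hmeas
  have hIF : IndepFun Pn (X n) μ := by
    have hφ : Measurable (fun g : {x // x ∈ Finset.range n} → ℝ =>
        (fun i : Fin n => g ⟨(i : ℕ), Finset.mem_range.mpr i.isLt⟩)) :=
      measurable_pi_lambda _ fun i => measurable_pi_apply _
    have hψ : Measurable (fun g : {x // x ∈ ({n} : Finset ℕ)} → ℝ =>
        g ⟨n, Finset.mem_singleton_self n⟩) := measurable_pi_apply _
    exact hfin.comp hφ hψ
  have hmap : μ.map (fun ω => (Pn ω, X n ω)) = (μ.map Pn).prod (μ.map (X n)) :=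
    (indepFun_iff_map_prod_eq_prod_map_map hPn.aemeasurable hXn.aemeasurable).mp hIF
  have h1 : IsProbabilityMeasure (μ.map Pn) := Measure.isProbabilityMeasure_map hPn.aemeasurable
  have h2 : IsProbabilityMeasure (μ.map (X n)) := Measure.isProbabilityMeasure_map hXn.aemeasurable
  have hinner_meas : Measurable (fun v : Fin n → ℝ => ∫⁻ ω', F (v, X n ω') ∂μ) := by
    apply Measurable.lintegral_prod_right'
      (f := fun p : (Fin n → ℝ) × Ω => F (p.1, X n p.2))
    exact hF.comp (measurable_fst.prodMk (hXn.comp measurable_snd))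
  calc ∫⁻ ω, F (Pn ω, X n ω) ∂μ
      = ∫⁻ p, F p ∂(μ.map (fun ω => (Pn ω, X n ω))) :=
        (lintegral_map hF (hPn.prodMk hXn)).symm
    _ = ∫⁻ p, F p ∂((μ.map Pn).prod (μ.map (X n))) := by rw [hmap]
    _ = ∫⁻ v, ∫⁻ z, F (v, z) ∂(μ.map (X n)) ∂(μ.map Pn) := lintegral_prod _ hF.aemeasurable
    _ = ∫⁻ v, ∫⁻ ω', F (v, X n ω') ∂μ ∂(μ.map Pn) := by
        apply lintegral_congr
        intro v
        exact lintegral_map (hF.comp measurable_prodMk_left) hXn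
    _ = ∫⁻ ω, ∫⁻ ω', F (Pn ω, X n ω') ∂μ ∂μ := lintegral_map hinner_meas hPn


set_option maxHeartbeats 1600000 in
/-- Lemma `lem:estsub`, (est7sub). For a random walk with negative drift
such that `E[e^{γ S_1}] = 1` and exponential moments on `(-η₁, γ + η₂)`: for every `α ≥ 0`
there is `c'' > 0` such that for all `L > 1` and `a ∈ [0, L]`,
`E_a[∑_{ℓ=0}^{min(τ_0^-, τ_L^+)} (1 + L - S_ℓ)^α e^{γ S_ℓ}] ≤ c'' e^{γ a} (1 + L - a)^{1+α}`. -/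
theorem negative_drift_two_sided_weighted_sum_bound
    (μ : Measure Ω) [IsProbabilityMeasure μ]
    (X : ℕ → Ω → ℝ) (hmeas : ∀ i, Measurable (X i))
    (hindep : iIndepFun X μ)
    (hident : ∀ i, IdentDistrib (X i) (X 0) μ μ)
    (hdrift : ∫ ω, X 0 ω ∂μ < 0)
    (γ η₁ η₂ : ℝ) (hγ : 0 < γ) (hη₁ : 0 < η₁) (hη₂ : 0 < η₂)
    (hγ1 : ∫ ω, Real.exp (γ * X 0 ω) ∂μ = 1)
    (hexp : ∀ u : ℝ, -η₁ < u → u < γ + η₂ →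
      Integrable (fun ω => Real.exp (u * X 0 ω)) μ)
    (α : ℝ) (hα : 0 ≤ α) :
    ∃ c : ℝ, 0 < c ∧ ∀ L : ℝ, 1 < L → ∀ a : ℝ, 0 ≤ a → a ≤ L →
      ∫⁻ ω, ∑' l : ℕ, (if (l : ℕ∞) ≤ min (hitBelow X a 0 ω) (hitAbove X a L ω)
          then ENNReal.ofReal ((1 + L - walk X a l ω) ^ α * Real.exp (γ * walk X a l ω))
          else 0) ∂μ
        ≤ ENNReal.ofReal (c * Real.exp (γ * a) * (1 + L - a) ^ (1 + α)) := by
  obtain ⟨K, R, hK1, hR0, hdr⟩ := aux_drift (hmeas 0) hγ hη₁ hη₂ hdrift hγ1 hexp hα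
  have h1α : (0:ℝ) ≤ 1 + α := by linarith
  refine ⟨K * (1 + R) ^ (1 + α), by positivity, fun L hL a ha0 haL => ?_⟩
  -- Lyapunov weight
  set Z : ℝ → ℝ≥0∞ := fun t =>
    if 1 ≤ t then ENNReal.ofReal (K * (t + R) ^ (1 + α))
    else ENNReal.ofReal ((2 - t) ^ α) with hZdef
  set Φ : ℝ → ℝ≥0∞ := fun y => ENNReal.ofReal (Real.exp (γ * y)) * Z (1 + L - y) with hΦdef
  set G : ℝ → ℝ≥0∞ := fun y =>
    ENNReal.ofReal ((1 + L - y) ^ α * Real.exp (γ * y)) with hGdef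
  have hZm : Measurable Z := by
    apply Measurable.ite measurableSet_Ici
    · exact ENNReal.measurable_ofReal.comp
        (((Real.continuous_rpow_const h1α).measurable.comp
          (measurable_id.add_const R)).const_mul K)
    · exact ENNReal.measurable_ofReal.comp
        ((Real.continuous_rpow_const hα).measurable.comp
          (measurable_const.sub measurable_id))
  have hΦm : Measurable Φ :=
    (ENNReal.measurable_ofReal.comp
      (Real.measurable_exp.comp (measurable_id.const_mul γ))).mul
      (hZm.comp (measurable_const.sub measurable_id))
  have hGm : Measurable G := by
    apply ENNReal.measurable_ofReal.comp
    exact ((Real.continuous_rpow_const hα).measurable.comp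
      (measurable_const.sub measurable_id)).mul
      (Real.measurable_exp.comp (measurable_id.const_mul γ))
  -- walk measurability
  have hwalkm : ∀ k, Measurable (walk X a k) := by
    intro k
    apply Measurable.add measurable_const
    exact Finset.measurable_sum _ fun i _ => hmeas i
  -- events
  set E : ℕ → Set Ω := fun n =>
    {ω | ∀ k, k < n → 0 ≤ walk X a k ω ∧ walk X a k ω ≤ L} with hEdef
  have hEm : ∀ n, MeasurableSet (E n) := by
    intro n
    have : E n = ⋂ (k : ℕ), ⋂ (_ : k < n),
        ({ω | 0 ≤ walk X a k ω} ∩ {ω | walk X a k ω ≤ L}) := by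
      ext ω; simp [hEdef, Set.mem_iInter, Set.mem_setOf_eq]
    rw [this]
    exact MeasurableSet.iInter fun k => MeasurableSet.iInter fun _ =>
      ((hwalkm k) measurableSet_Ici).inter ((hwalkm k) measurableSet_Iic)
  have hEmono : ∀ n, E (n+1) ⊆ E n := by
    intro n ω hω k hk
    exact hω k (by omega)
  -- identification of the indicator via the stopping time
  have hT_iff : ∀ (n : ℕ) ω,
      ((n : ℕ∞) ≤ min (hitBelow X a 0 ω) (hitAbove X a L ω)) ↔ ω ∈ E n := by
    intro n ω
    rw [le_min_iff]
    have h1 : ((n : ℕ∞) ≤ hitBelow X a 0 ω) ↔ ∀ k, walk X a k ω < 0 → n ≤ k := by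
      rw [hitBelow]
      simp only [le_iInf_iff, Nat.cast_le]
    have h2 : ((n : ℕ∞) ≤ hitAbove X a L ω) ↔ ∀ k, L < walk X a k ω → n ≤ k := by
      rw [hitAbove]
      simp only [le_iInf_iff, Nat.cast_le]
    rw [h1, h2]
    constructor
    · rintro ⟨hb, hab⟩ k hk
      constructor
      · by_contra hc
        exact absurd (hb k (not_le.mp hc)) (by omega)
      · by_contra hc
        exact absurd (hab k (not_le.mp hc)) (by omega)
    · intro h
      constructor
      · intro k hk
        by_contra hc
        have := (h k (by omega)).1
        linarith
      · intro k hk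
        by_contra hc
        have := (h k (by omega)).2
        linarith
  -- the two key pointwise inequalities
  have hGΦ : ∀ y : ℝ, G y ≤ Φ y := by
    intro y
    set t := 1 + L - y with htdef
    by_cases ht : 1 ≤ t
    · have ht0 : (0:ℝ) ≤ t := by linarith
      have hb : t ^ α ≤ K * (t + R) ^ (1 + α) := by
        have h1 : t ^ α ≤ t ^ (1 + α) :=
          Real.rpow_le_rpow_of_exponent_le ht (by linarith)
        have h2 : t ^ (1 + α) ≤ (t + R) ^ (1 + α) :=
          Real.rpow_le_rpow ht0 (by linarith) h1α
        have h3 : (t + R) ^ (1 + α) ≤ K * (t + R) ^ (1 + α) := by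
          nlinarith [Real.rpow_nonneg (by linarith : (0:ℝ) ≤ t + R) (1 + α)]
        linarith
      calc G y = ENNReal.ofReal (t ^ α * Real.exp (γ * y)) := rfl
        _ ≤ ENNReal.ofReal ((K * (t + R) ^ (1 + α)) * Real.exp (γ * y)) := by
            apply ENNReal.ofReal_le_ofReal
            exact mul_le_mul_of_nonneg_right hb (Real.exp_pos _).le
        _ = ENNReal.ofReal (Real.exp (γ * y)) * ENNReal.ofReal (K * (t + R) ^ (1 + α)) := by
            rw [mul_comm ((K * (t + R) ^ (1 + α))) (Real.exp (γ * y)),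
              ENNReal.ofReal_mul (Real.exp_pos _).le]
        _ = Φ y := by rw [hΦdef]; simp only [← htdef, hZdef, if_pos ht]
    · have hb : t ^ α ≤ (2 - t) ^ α := by
        rcases le_or_gt 0 t with h0 | h0
        · calc t ^ α ≤ 1 := Real.rpow_le_one h0 (by linarith [not_le.mp ht]) hα
            _ ≤ (2 - t) ^ α := Real.one_le_rpow (by linarith [not_le.mp ht]) hα
        · calc t ^ α ≤ |t ^ α| := le_abs_self _
            _ ≤ |t| ^ α := Real.abs_rpow_le_abs_rpow t α
            _ = (-t) ^ α := by rw [abs_of_neg h0]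
            _ ≤ (2 - t) ^ α := Real.rpow_le_rpow (by linarith) (by linarith) hα
      calc G y = ENNReal.ofReal (t ^ α * Real.exp (γ * y)) := rfl
        _ ≤ ENNReal.ofReal ((2 - t) ^ α * Real.exp (γ * y)) := by
            apply ENNReal.ofReal_le_ofReal
            exact mul_le_mul_of_nonneg_right hb (Real.exp_pos _).le
        _ = ENNReal.ofReal (Real.exp (γ * y)) * ENNReal.ofReal ((2 - t) ^ α) := by
            rw [mul_comm ((2 - t) ^ α) (Real.exp (γ * y)),
              ENNReal.ofReal_mul (Real.exp_pos _).le]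
        _ = Φ y := by rw [hΦdef]; simp only [← htdef, hZdef, if_neg ht]
  set Ψ : ℝ → ℝ≥0∞ := fun x => ∫⁻ ω', Φ (x + X 0 ω') ∂μ with hΨdef
  have hdriftΦ : ∀ x : ℝ, 0 ≤ x → x ≤ L → G x + Ψ x ≤ Φ x := by
    intro x hx0 hxL
    set t := 1 + L - x with htdef
    have ht : 1 ≤ t := by rw [htdef]; linarith
    have hΨ : Ψ x = ENNReal.ofReal (Real.exp (γ * x)) *
        ∫⁻ ω', ENNReal.ofReal (Real.exp (γ * X 0 ω')) *
          (if 1 ≤ t - X 0 ω' then ENNReal.ofReal (K * (t - X 0 ω' + R) ^ (1 + α))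
            else ENNReal.ofReal ((2 - (t - X 0 ω')) ^ α)) ∂μ := by
      rw [hΨdef, ← lintegral_const_mul' _ _ ENNReal.ofReal_ne_top]
      apply lintegral_congr
      intro ω'
      have he : Real.exp (γ * (x + X 0 ω')) = Real.exp (γ * x) * Real.exp (γ * X 0 ω') := by
        rw [← Real.exp_add]; congr 1; ring
      have harg : 1 + L - (x + X 0 ω') = t - X 0 ω' := by rw [htdef]; ring
      show ENNReal.ofReal (Real.exp (γ * (x + X 0 ω'))) * Z (1 + L - (x + X 0 ω')) = _
      rw [he, harg, ENNReal.ofReal_mul (Real.exp_pos _).le, mul_assoc]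
    have hGx : G x = ENNReal.ofReal (Real.exp (γ * x)) * ENNReal.ofReal (t ^ α) := by
      rw [hGdef]
      simp only [← htdef]
      rw [mul_comm (t ^ α) (Real.exp (γ * x)), ENNReal.ofReal_mul (Real.exp_pos _).le]
    have hΦx : Φ x = ENNReal.ofReal (Real.exp (γ * x)) *
        ENNReal.ofReal (K * (t + R) ^ (1 + α)) := by
      rw [hΦdef]
      simp only [← htdef, hZdef, if_pos ht]
    rw [hGx, hΨ, hΦx, ← mul_add]
    exact mul_le_mul_right (hdr t ht) _
  -- the sequences I and J
  set J : ℕ → ℝ≥0∞ := fun n =>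
    ∫⁻ ω, (E n).indicator (fun ω => Φ (walk X a n ω)) ω ∂μ with hJdef
  set I : ℕ → ℝ≥0∞ := fun n =>
    ∫⁻ ω, (E n).indicator (fun ω => G (walk X a n ω)) ω ∂μ with hIdef
  have hstep : ∀ n, I n + J (n+1) ≤ J n := by
    intro n
    -- partial walk on coordinates
    set pwalk : (Fin n → ℝ) → ℕ → ℝ := fun v k =>
      a + ∑ i ∈ Finset.range k, (if h : i < n then v ⟨i, h⟩ else 0) with hpwdef
    have hpwm : ∀ k, Measurable fun v => pwalk v k := by
      intro k
      apply Measurable.add measurable_const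
      apply Finset.measurable_sum
      intro i _
      by_cases h : i < n
      · simp only [dif_pos h]; exact measurable_pi_apply _
      · simp only [dif_neg h]; exact measurable_const
    have hpw_eq : ∀ (k : ℕ), k ≤ n → ∀ ω, pwalk (fun i : Fin n => X i ω) k = walk X a k ω := by
      intro k hk ω
      rw [hpwdef, walk]
      simp only []
      congr 1
      apply Finset.sum_congr rfl
      intro i hi
      have hin : i < n := lt_of_lt_of_le (Finset.mem_range.mp hi) hk
      rw [dif_pos hin]
    set D : Set (Fin n → ℝ) := {v | ∀ k, k ≤ n → 0 ≤ pwalk v k ∧ pwalk v k ≤ L} with hDdef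
    have hD : MeasurableSet D := by
      have : D = ⋂ (k : ℕ), ⋂ (_ : k ≤ n),
          ({v | 0 ≤ pwalk v k} ∩ {v | pwalk v k ≤ L}) := by
        ext v; simp [hDdef, Set.mem_iInter, Set.mem_setOf_eq]
      rw [this]
      exact MeasurableSet.iInter fun k => MeasurableSet.iInter fun _ =>
        ((hpwm k) measurableSet_Ici).inter ((hpwm k) measurableSet_Iic)
    set F : (Fin n → ℝ) × ℝ → ℝ≥0∞ := fun p =>
      D.indicator (fun _ => 1) p.1 * Φ (pwalk p.1 n + p.2) with hFdef
    have hF : Measurable F := by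
      apply Measurable.mul
      · exact (measurable_one.indicator hD).comp measurable_fst
      · exact hΦm.comp (((hpwm n).comp measurable_fst).add measurable_snd)
    have hmemD : ∀ ω, ((fun i : Fin n => X i ω) ∈ D) ↔ ω ∈ E (n+1) := by
      intro ω
      constructor
      · intro h k hk
        have hk' : k ≤ n := by omega
        have := h k hk'
        rwa [hpw_eq k hk' ω] at this
      · intro h k hk
        rw [hpw_eq k hk ω]
        exact h k (by omega)
    have hwalk_succ : ∀ ω, walk X a (n+1) ω = walk X a n ω + X n ω := by
      intro ω
      rw [walk, walk, Finset.sum_range_succ]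
      ring
    have hJ1 : J (n+1) = ∫⁻ ω, F (fun i : Fin n => X i ω, X n ω) ∂μ := by
      rw [hJdef]
      apply lintegral_congr
      intro ω
      rw [hFdef]
      simp only []
      by_cases h : ω ∈ E (n+1)
      · rw [Set.indicator_of_mem h, Set.indicator_of_mem ((hmemD ω).mpr h), one_mul,
          hpw_eq n (le_refl n) ω, ← hwalk_succ ω]
      · rw [Set.indicator_of_notMem h,
          Set.indicator_of_notMem (fun hc => h ((hmemD ω).mp hc)), zero_mul]
    have hJ2 : J (n+1) = ∫⁻ ω, (E (n+1)).indicator (fun ω => Ψ (walk X a n ω)) ω ∂μ := by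
      rw [hJ1, aux_indep_step μ X hmeas hindep n F hF]
      apply lintegral_congr
      intro ω
      have hinner : ∫⁻ ω', F (fun i : Fin n => X i ω, X n ω') ∂μ
          = D.indicator (fun _ => 1) (fun i : Fin n => X i ω) * Ψ (walk X a n ω) := by
        rw [hFdef]
        simp only []
        rw [lintegral_const_mul' _ _ (by
          by_cases h : (fun i : Fin n => X i ω) ∈ D
          · rw [Set.indicator_of_mem h]; exact ENNReal.one_ne_top
          · rw [Set.indicator_of_notMem h]; exact ENNReal.zero_ne_top)]
      -- identify inner integral with Ψ via identical distribution
        congr 1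
        rw [hpw_eq n (le_refl n) ω]
        have e1 : ∫⁻ ω', Φ (walk X a n ω + X n ω') ∂μ
            = ∫⁻ z, Φ (walk X a n ω + z) ∂(μ.map (X n)) :=
          (lintegral_map (hΦm.comp (measurable_const.add measurable_id)) (hmeas n)).symm
        have e2 : ∫⁻ ω', Φ (walk X a n ω + X 0 ω') ∂μ
            = ∫⁻ z, Φ (walk X a n ω + z) ∂(μ.map (X 0)) :=
          (lintegral_map (hΦm.comp (measurable_const.add measurable_id)) (hmeas 0)).symm
        show ∫⁻ ω', Φ (walk X a n ω + X n ω') ∂μ = ∫⁻ ω', Φ (walk X a n ω + X 0 ω') ∂μ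
        rw [e1, e2, (hident n).map_eq]
      rw [hinner]
      by_cases h : ω ∈ E (n+1)
      · rw [Set.indicator_of_mem ((hmemD ω).mpr h), Set.indicator_of_mem h, one_mul]
      · rw [Set.indicator_of_notMem (fun hc => h ((hmemD ω).mp hc)),
          Set.indicator_of_notMem h, zero_mul]
    -- pointwise supermartingale inequality
    rw [hIdef, hJ2]
    simp only []
    have hfmeas : Measurable fun ω => (E n).indicator (fun ω => G (walk X a n ω)) ω :=
      (hGm.comp (hwalkm n)).indicator (hEm n)
    rw [← lintegral_add_left hfmeas]
    apply lintegral_mono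
    intro ω
    simp only []
    by_cases h1 : ω ∈ E (n+1)
    · have h0 : ω ∈ E n := hEmono n h1
      rw [Set.indicator_of_mem h0, Set.indicator_of_mem h1, Set.indicator_of_mem h0]
      have hxn := h1 n (by omega)
      exact hdriftΦ (walk X a n ω) hxn.1 hxn.2
    · rw [Set.indicator_of_notMem h1, add_zero]
      by_cases h0 : ω ∈ E n
      · rw [Set.indicator_of_mem h0, Set.indicator_of_mem h0]
        exact hGΦ _
      · rw [Set.indicator_of_notMem h0, Set.indicator_of_notMem h0]
  -- telescoping
  have htel : ∀ N : ℕ, (∑ k ∈ Finset.range N, I k) + J N ≤ J 0 := by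
    intro N
    induction N with
    | zero => simp
    | succ N ih =>
      rw [Finset.sum_range_succ]
      calc ∑ k ∈ Finset.range N, I k + I N + J (N + 1)
          = ∑ k ∈ Finset.range N, I k + (I N + J (N + 1)) := by rw [add_assoc]
        _ ≤ ∑ k ∈ Finset.range N, I k + J N := add_le_add le_rfl (hstep N)
        _ ≤ J 0 := ih
  have hsum_le : ∀ N : ℕ, (∑ k ∈ Finset.range N, I k) ≤ J 0 :=
    fun N => le_trans (le_add_right (le_refl _)) (htel N)
  have hJ0 : J 0 = Φ a := by
    show ∫⁻ ω, (E 0).indicator (fun ω => Φ (walk X a 0 ω)) ω ∂μ = Φ a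
    have hE0 : E 0 = Set.univ := by
      ext ω; simp [hEdef]
    have hw0 : ∀ ω : Ω, walk X a 0 ω = a := by
      intro ω; rw [walk]; simp
    rw [hE0]
    simp only [Set.indicator_univ]
    calc ∫⁻ ω, Φ (walk X a 0 ω) ∂μ = ∫⁻ _, Φ a ∂μ := by
          apply lintegral_congr; intro ω; rw [hw0]
      _ = Φ a := by rw [lintegral_const, measure_univ, mul_one]
  -- rewrite the LHS as a tsum of the I's
  have hterm : ∀ (l : ℕ) (ω : Ω),
      (if (l : ℕ∞) ≤ min (hitBelow X a 0 ω) (hitAbove X a L ω)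
        then ENNReal.ofReal ((1 + L - walk X a l ω) ^ α * Real.exp (γ * walk X a l ω))
        else 0)
      = (E l).indicator (fun ω => G (walk X a l ω)) ω := by
    intro l ω
    rw [Set.indicator_apply]
    exact if_congr (hT_iff l ω) rfl rfl
  have hLHS : ∫⁻ ω, ∑' l : ℕ, (if (l : ℕ∞) ≤ min (hitBelow X a 0 ω) (hitAbove X a L ω)
      then ENNReal.ofReal ((1 + L - walk X a l ω) ^ α * Real.exp (γ * walk X a l ω))
      else 0) ∂μ = ∑' l : ℕ, I l := by
    calc ∫⁻ ω, ∑' l : ℕ, (if (l : ℕ∞) ≤ min (hitBelow X a 0 ω) (hitAbove X a L ω)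
        then ENNReal.ofReal ((1 + L - walk X a l ω) ^ α * Real.exp (γ * walk X a l ω))
        else 0) ∂μ
        = ∫⁻ ω, ∑' l : ℕ, (E l).indicator (fun ω => G (walk X a l ω)) ω ∂μ := by
          apply lintegral_congr
          intro ω
          exact tsum_congr fun l => hterm l ω
      _ = ∑' l : ℕ, I l := by
          rw [lintegral_tsum]
          intro l
          exact ((hGm.comp (hwalkm l)).indicator (hEm l)).aemeasurable
  rw [hLHS]
  have htsum : ∑' l : ℕ, I l ≤ J 0 := by
    rw [ENNReal.tsum_eq_iSup_sum]
    apply iSup_le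
    intro s
    obtain ⟨N, hN⟩ := s.exists_nat_subset_range
    calc ∑ k ∈ s, I k ≤ ∑ k ∈ Finset.range N, I k :=
          Finset.sum_le_sum_of_subset hN
      _ ≤ J 0 := hsum_le N
  -- conclude
  have hfinal : Φ a ≤ ENNReal.ofReal
      (K * (1 + R) ^ (1 + α) * Real.exp (γ * a) * (1 + L - a) ^ (1 + α)) := by
    have hu1 : (1:ℝ) ≤ 1 + L - a := by linarith
    have hu0 : (0:ℝ) ≤ 1 + L - a := by linarith
    have ht : Z (1 + L - a) = ENNReal.ofReal (K * (1 + L - a + R) ^ (1 + α)) := by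
      rw [hZdef]; simp only [if_pos hu1]
    have hb : (1 + L - a + R) ^ (1 + α) ≤ (1 + R) ^ (1 + α) * (1 + L - a) ^ (1 + α) := by
      rw [← Real.mul_rpow (by linarith) hu0]
      apply Real.rpow_le_rpow (by linarith) _ h1α
      nlinarith
    rw [hΦdef]
    simp only []
    rw [ht, ← ENNReal.ofReal_mul (Real.exp_pos _).le]
    apply ENNReal.ofReal_le_ofReal
    have hKpos : (0:ℝ) < K := by linarith
    calc Real.exp (γ * a) * (K * (1 + L - a + R) ^ (1 + α))
        ≤ Real.exp (γ * a) * (K * ((1 + R) ^ (1 + α) * (1 + L - a) ^ (1 + α))) := by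
          apply mul_le_mul_of_nonneg_left _ (Real.exp_pos _).le
          exact mul_le_mul_of_nonneg_left hb hKpos.le
      _ = K * (1 + R) ^ (1 + α) * Real.exp (γ * a) * (1 + L - a) ^ (1 + α) := by ring
  calc ∑' l : ℕ, I l ≤ J 0 := htsum
    _ = Φ a := hJ0
    _ ≤ _ := hfinal
end
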